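/- arXiv:2507.11370 — 6 statements merged into one kernel-verified Lean document; each statement's English description precedes it below -/
import Mathlib

section
/- Let f(z) = sin(z)/2. If z ∈ ℂ satisfies 0 < |Im z| < t₀, where t₀ is the unique positive fixed point of t ↦ sinh(t)/2, then |Im f(z)| < |Im z|. -/
lemma sinh_lt_two_mul {s : ℝ} (hs : 0 < s) (hs2 : s ≤ 1/2) : Real.sinh s < 2 * s := by
  have h1 : 1 - s ≤ Real.exp (-s) := by linarith [Real.add_one_le_exp (-s)]
  have hpos : (0:ℝ) < 1 - s := by linarith
  have h2 : Real.exp s ≤ 1 / (1 - s) := by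
    rw [le_div_iff₀ hpos]
    calc Real.exp s * (1 - s) ≤ Real.exp s * Real.exp (-s) := by
          exact mul_le_mul_of_nonneg_left h1 (Real.exp_pos s).le
      _ = 1 := by rw [← Real.exp_add]; simp
  have : Real.exp s - Real.exp (-s) ≤ 1 / (1 - s) - (1 - s) := by linarith
  have key : 1 / (1 - s) - (1 - s) < 4 * s := by
    rw [div_sub' hpos.ne', div_lt_iff₀ hpos]
    nlinarith
  rw [Real.sinh_eq]
  linarith

lemma sinh_half_lt {t₀ : ℝ} (ht₀ : 0 < t₀)
    (huniq : ∀ t : ℝ, 0 < t → Real.sinh t / 2 = t → t = t₀)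
    {t : ℝ} (h1 : 0 < t) (h2 : t < t₀) : Real.sinh t / 2 < t := by
  by_contra h
  push_neg at h
  rcases eq_or_lt_of_le h with heq | hlt
  · have := huniq t h1 heq.symm; linarith
  · -- sinh t / 2 > t
    have ht12 : (1:ℝ)/2 < t := by
      by_contra hle
      push_neg at hle
      have := sinh_lt_two_mul h1 hle
      linarith
    set g : ℝ → ℝ := fun x => Real.sinh x / 2 - x with hg
    have hga : g (1/2) < 0 := by
      have := sinh_lt_two_mul (by norm_num : (0:ℝ) < 1/2) le_rfl
      simp only [hg]; linarith
    have hgb : 0 < g t := by simp only [hg]; linarith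
    have hcont : ContinuousOn g (Set.Icc (1/2) t) :=
      (Real.continuous_sinh.div_const 2).sub continuous_id |>.continuousOn
    have := intermediate_value_Ioo ht12.le hcont
    have hmem : (0:ℝ) ∈ Set.Ioo (g (1/2)) (g t) := ⟨hga, hgb⟩
    obtain ⟨r, hr, hgr⟩ := this hmem
    have hr0 : 0 < r := lt_trans (by norm_num) hr.1
    have : Real.sinh r / 2 = r := by simp only [hg] at hgr; linarith
    have := huniq r hr0 this
    have : r < t₀ := lt_trans hr.2 h2
    linarith

/-- For `f(z) = sin(z)/2`: if `0 < |Im z| < t₀`, where `t₀` is the unique positive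
fixed point of `t ↦ sinh(t)/2`, then `|Im f(z)| < |Im z|`. -/
theorem stmt_1 (f : ℂ → ℂ) (hf : ∀ z, f z = Complex.sin z / 2)
    (t₀ : ℝ) (ht₀ : 0 < t₀) (hfix : Real.sinh t₀ / 2 = t₀)
    (huniq : ∀ t : ℝ, 0 < t → Real.sinh t / 2 = t → t = t₀)
    (z : ℂ) (h1 : 0 < |z.im|) (h2 : |z.im| < t₀) :
    |(f z).im| < |z.im| := by
  have him : (f z).im = Real.cos z.re * Real.sinh z.im / 2 := by
    rw [hf]
    have hs : (Complex.sin z).im = Real.cos z.re * Real.sinh z.im := by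
      rw [Complex.sin_eq, ← Complex.ofReal_sin, ← Complex.ofReal_cosh,
        ← Complex.ofReal_cos, ← Complex.ofReal_sinh]
      simp [Complex.cos_ofReal_re, Complex.sinh_ofReal_re]
    simp [Complex.div_im, Complex.normSq, hs]
  have hb : |(f z).im| ≤ Real.sinh |z.im| / 2 := by
    rw [him, ← Real.abs_sinh]
    rw [abs_div, abs_mul]
    have : |Real.cos z.re| ≤ 1 := Real.abs_cos_le_one _
    have hsp : 0 ≤ |Real.sinh z.im| := abs_nonneg _
    calc |Real.cos z.re| * |Real.sinh z.im| / |(2:ℝ)|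
        ≤ 1 * |Real.sinh z.im| / 2 := by
          rw [abs_two]
          gcongr
      _ = |Real.sinh z.im| / 2 := by ring
  exact lt_of_le_of_lt hb (sinh_half_lt ht₀ huniq h1 h2)
end

section
/- A non-degenerate continuum (compact connected metric space with more than one point) admitting a total ordering whose order topology agrees with its metric topology is homeomorphic to the closed interval [0,1]. -/
open Set

/-- A non-degenerate continuum (compact connected metric space with more than one point)
admitting a total ordering whose order topology agrees with its metric topology is
homeomorphic to the closed interval `[0,1]`. -/
theorem stmt_6 (X : Type*) [MetricSpace X] [CompactSpace X] [ConnectedSpace X]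
    [Nontrivial X] [LinearOrder X] [OrderTopology X] :
    Nonempty (X ≃ₜ (Set.Icc (0 : ℝ) 1)) := by
  -- X is densely ordered
  haveI hdo : DenselyOrdered X := by
    constructor
    intro p q hpq
    by_contra h
    push_neg at h
    have hcl : IsClosed (Iio q) := by
      have : Iio q = Iic p := by
        ext z
        constructor
        · intro hz
          by_contra hz'
          exact absurd (h z (lt_of_not_ge hz')) (not_le.mpr hz)
        · intro hz; exact lt_of_le_of_lt hz hpq
      rw [this]; exact isClosed_Iic
    have hclopen : IsClopen (Iio q) := ⟨hcl, isOpen_Iio⟩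
    rcases isClopen_iff.mp hclopen with he | hu
    · exact (Set.eq_empty_iff_forall_notMem.mp he p) hpq
    · have : q ∈ Iio q := hu.symm ▸ mem_univ q
      exact lt_irrefl q this
  -- least and greatest elements
  obtain ⟨a, -, ha⟩ := (isCompact_univ (X := X)).exists_isLeast univ_nonempty
  obtain ⟨b, -, hb⟩ := (isCompact_univ (X := X)).exists_isGreatest univ_nonempty
  simp only [mem_lowerBounds, mem_univ, forall_true_left] at ha
  simp only [mem_upperBounds, mem_univ, forall_true_left] at hb
  have hab : a < b := by
    obtain ⟨x, y, hxy⟩ := exists_pair_ne X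
    rcases lt_or_gt_of_ne hxy with h | h
    · exact lt_of_le_of_lt (ha x) (lt_of_lt_of_le h (hb y))
    · exact lt_of_le_of_lt (ha y) (lt_of_lt_of_le h (hb x))
  -- every nonempty set has a LUB
  have hlub : ∀ S : Set X, S.Nonempty → ∃ x, IsLUB S x := by
    intro S hS
    have hcl : IsClosed (upperBounds S) := by
      have : upperBounds S = ⋂ y ∈ S, Ici y := by
        ext z; simp [upperBounds, mem_iInter]
      rw [this]
      exact isClosed_biInter fun y _ => isClosed_Ici
    have hne : (upperBounds S).Nonempty := ⟨b, fun y _ => hb y⟩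
    obtain ⟨x, hx⟩ := hcl.isCompact.exists_isLeast hne
    exact ⟨x, hx⟩
  -- countable dense set
  obtain ⟨D, hDc, hDd⟩ := TopologicalSpace.exists_countable_dense X
  set s : Set X := D ∩ Ioo a b with hs
  -- density of s between any two points
  have hdense : ∀ x y : X, x < y → ∃ d : s, x < (d : X) ∧ (d : X) < y := by
    intro x y hxy
    obtain ⟨d, hd, hdD⟩ := hDd.inter_open_nonempty (Ioo x y) isOpen_Ioo
      (let ⟨c, hc⟩ := exists_between hxy; ⟨c, hc⟩)
    refine ⟨⟨d, hdD, ?_, ?_⟩, hd.1, hd.2⟩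
    · exact lt_of_le_of_lt (ha x) hd.1
    · exact lt_of_lt_of_le hd.2 (hb y)
  -- instances on s
  haveI : Countable s := (hDc.mono inter_subset_left).to_subtype
  haveI : Nonempty s := by
    obtain ⟨d, hd1, hd2⟩ := hdense a b hab
    exact ⟨d⟩
  haveI : DenselyOrdered s := by
    constructor
    rintro ⟨x, hx⟩ ⟨y, hy⟩ h
    obtain ⟨d, hd1, hd2⟩ := hdense x y h
    exact ⟨d, hd1, hd2⟩
  haveI : NoMinOrder s := by
    constructor
    rintro ⟨x, hxD, hx⟩
    obtain ⟨d, hd1, hd2⟩ := hdense a x hx.1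
    exact ⟨d, hd2⟩
  haveI : NoMaxOrder s := by
    constructor
    rintro ⟨x, hxD, hx⟩
    obtain ⟨d, hd1, hd2⟩ := hdense x b hx.2
    exact ⟨d, hd1⟩
  -- rational interval
  haveI : Nonempty (Ioo (0:ℚ) 1) := ⟨⟨1/2, by norm_num, by norm_num⟩⟩
  obtain ⟨g⟩ := Order.iso_of_countable_dense s (Ioo (0:ℚ) 1)
  -- the real-valued map on s
  set gr : s → ℝ := fun d => ((g d : ℚ) : ℝ) with hgr
  have hgr0 : ∀ d, 0 < gr d := fun d => by simp only [hgr]; exact_mod_cast (g d).2.1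
  have hgr1 : ∀ d, gr d < 1 := fun d => by simp only [hgr]; exact_mod_cast (g d).2.2
  have hgrmono : StrictMono gr := fun d1 d2 h => by
    simp only [hgr]
    exact_mod_cast Subtype.coe_lt_coe.mpr (g.lt_iff_lt.mpr h)
  -- the extension f
  set f : X → ℝ := fun x => sSup (insert 0 (gr '' {d : s | (d : X) < x})) with hf
  have hbdd : ∀ x : X, BddAbove (insert 0 (gr '' {d : s | (d : X) < x})) := by
    intro x
    refine ⟨1, ?_⟩
    rintro y (rfl | ⟨d, -, rfl⟩)
    · norm_num
    · exact le_of_lt (hgr1 d)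
  have hne' : ∀ x : X, (insert (0:ℝ) (gr '' {d : s | (d : X) < x})).Nonempty :=
    fun x => ⟨0, mem_insert _ _⟩
  have hf0 : ∀ x, 0 ≤ f x := fun x => le_csSup (hbdd x) (mem_insert _ _)
  have hle : ∀ (x : X) (d : s), (d : X) < x → gr d ≤ f x := fun x d hd =>
    le_csSup (hbdd x) (mem_insert_of_mem _ ⟨d, hd, rfl⟩)
  have hub : ∀ (x : X) (r : ℝ), 0 ≤ r → (∀ d : s, (d : X) < x → gr d ≤ r) → f x ≤ r := by
    intro x r hr h
    apply csSup_le (hne' x)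
    rintro y (rfl | ⟨d, hd, rfl⟩)
    · exact hr
    · exact h d hd
  have hf1 : ∀ x, f x ≤ 1 :=
    fun x => hub x 1 zero_le_one fun d _ => le_of_lt (hgr1 d)
  -- f is strictly monotone
  have hmono : StrictMono f := by
    intro x y hxy
    obtain ⟨d1, hd1x, hd1y⟩ := hdense x y hxy
    obtain ⟨d2, hd2a, hd2y⟩ := hdense (d1 : X) y hd1y
    have h1 : f x ≤ gr d1 := by
      apply hub x _ (le_of_lt (hgr0 d1))
      intro d hd
      exact le_of_lt (hgrmono (Subtype.coe_lt_coe.mp (lt_trans hd hd1x)))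
    have h2 : gr d1 < gr d2 := hgrmono (Subtype.coe_lt_coe.mp hd2a)
    have h3 : gr d2 ≤ f y := hle y d2 hd2y
    linarith
  -- f is surjective onto [0,1]
  have hsurj : ∀ r : ℝ, 0 ≤ r → r ≤ 1 → ∃ x, f x = r := by
    intro r hr0 hr1
    set S : Set X := insert a ((↑) '' {d : s | gr d < r}) with hS
    obtain ⟨x, hx⟩ := hlub S ⟨a, mem_insert _ _⟩
    refine ⟨x, le_antisymm ?_ ?_⟩
    · -- f x ≤ r
      apply hub x r hr0
      intro d hd
      have hnub : ¬ (d : X) ∈ upperBounds S := fun h => absurd (hx.2 h) (not_le.mpr hd)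
      simp only [upperBounds, mem_setOf_eq, not_forall] at hnub
      obtain ⟨t, htS, htd⟩ := hnub
      push_neg at htd
      rcases htS with rfl | ⟨d', hd', rfl⟩
      · exact absurd (ha (d : X)) (not_le.mpr htd)
      · have : gr d < gr d' := hgrmono (Subtype.coe_lt_coe.mp htd)
        exact le_of_lt (lt_trans this hd')
    · -- r ≤ f x
      by_contra hcon
      push_neg at hcon
      obtain ⟨q, hq1, hq2⟩ := exists_rat_btwn hcon
      obtain ⟨q2, hq21, hq22⟩ := exists_rat_btwn hq2
      have hq0 : (0:ℚ) < q := by exact_mod_cast lt_of_le_of_lt (hf0 x) hq1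
      have hqlt1 : q < 1 := by exact_mod_cast lt_of_lt_of_le hq2 hr1
      have hq20 : (0:ℚ) < q2 := by exact_mod_cast lt_trans (by exact_mod_cast hq0 : (0:ℝ) < q) hq21
      have hq2lt1 : q2 < 1 := by exact_mod_cast lt_of_lt_of_le hq22 hr1
      set d : s := g.symm ⟨q, hq0, hqlt1⟩ with hd
      set d2 : s := g.symm ⟨q2, hq20, hq2lt1⟩ with hd2
      have hgd : gr d = (q : ℝ) := by simp [hgr, hd]
      have hgd2 : gr d2 = (q2 : ℝ) := by simp [hgr, hd2]
      have hdd2 : d < d2 := by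
        rw [hd, hd2, g.symm.lt_iff_lt]
        exact Subtype.mk_lt_mk.mpr (by exact_mod_cast hq21)
      have hd2S : (d2 : X) ∈ S := mem_insert_of_mem _ ⟨d2, by rw [mem_setOf_eq, hgd2]; exact hq22, rfl⟩
      have hd2x : (d2 : X) ≤ x := hx.1 hd2S
      have hdx : (d : X) < x := lt_of_lt_of_le (Subtype.coe_lt_coe.mpr hdd2) hd2x
      have := hle x d hdx
      rw [hgd] at this
      linarith
  -- assemble the order isomorphism
  set F : X → Icc (0:ℝ) 1 := fun x => ⟨f x, hf0 x, hf1 x⟩ with hF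
  have hFmono : StrictMono F := fun x y h => Subtype.mk_lt_mk.mpr (hmono h)
  have hFsurj : Function.Surjective F := by
    rintro ⟨r, hr0, hr1⟩
    obtain ⟨x, hx⟩ := hsurj r hr0 hr1
    exact ⟨x, Subtype.ext hx⟩
  exact ⟨(StrictMono.orderIsoOfSurjective F hFmono hFsurj).toHomeomorph⟩
end

section
/- For every ρ ∈ (0,1) there exists a constant c > 0 such that: if h : 𝔻 → ℂ is holomorphic on the unit disc with h(0) = 0 and max_{|z|=ρ} |h(z)| ≥ 1, then there exists R ≥ c such that the entire circle {w : |w| = R} is contained in the image h(𝔻). -/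
open Metric Set MeasureTheory intervalIntegral

namespace BohrAux

lemma hasPrimitive {φ : ℂ → ℂ} {R : ℝ}
    (hφ : DifferentiableOn ℂ φ (ball 0 R)) {z₀ : ℂ} (hz₀ : z₀ ∈ ball (0:ℂ) R) :
    HasDerivAt (fun x : ℂ => ∫ t in (0:ℝ)..1, x * φ ((t:ℂ) * x)) (φ z₀) z₀ := by
  have hz₀n : ‖z₀‖ < R := by simpa [mem_ball, dist_eq_norm] using hz₀
  set ε : ℝ := (R - ‖z₀‖) / 2 with hεdef
  have hεpos : 0 < ε := by rw [hεdef]; linarith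
  have hxball : ∀ x : ℂ, x ∈ ball z₀ ε → ‖x‖ < ‖z₀‖ + ε := by
    intro x hx
    have h1 : ‖x - z₀‖ < ε := mem_ball_iff_norm.mp hx
    have h2 : ‖x‖ - ‖z₀‖ ≤ ‖x - z₀‖ := norm_sub_norm_le x z₀
    linarith
  have hK : ∀ x : ℂ, x ∈ ball z₀ ε → ∀ t : ℝ, |t| ≤ 1 → (t:ℂ) * x ∈ ball (0:ℂ) R := by
    intro x hx t ht
    have h3 : ‖(t:ℂ) * x‖ ≤ ‖x‖ := by
      rw [norm_mul, Complex.norm_real, Real.norm_eq_abs]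
      nlinarith [norm_nonneg x, abs_nonneg t]
    have := hxball x hx
    rw [mem_ball, dist_zero_right]
    rw [hεdef] at this
    linarith
  -- continuity facts
  have hφc : ContinuousOn φ (ball 0 R) := hφ.continuousOn
  have hφ' : DifferentiableOn ℂ (deriv φ) (ball 0 R) :=
    ((hφ.analyticOnNhd isOpen_ball).deriv).differentiableOn
  have hφ'c : ContinuousOn (deriv φ) (ball 0 R) := hφ'.continuousOn
  -- bounds on the compact set
  obtain ⟨C1, hC1⟩ : ∃ C1, ∀ y ∈ closedBall (0:ℂ) (‖z₀‖ + ε), ‖φ y‖ ≤ C1 := by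
    refine (isCompact_closedBall _ _).exists_bound_of_continuousOn (hφc.mono ?_)
    intro y hy
    rw [mem_closedBall, dist_zero_right] at hy
    rw [mem_ball, dist_zero_right, hεdef] at *
    linarith
  obtain ⟨C2, hC2⟩ : ∃ C2, ∀ y ∈ closedBall (0:ℂ) (‖z₀‖ + ε), ‖deriv φ y‖ ≤ C2 := by
    refine (isCompact_closedBall _ _).exists_bound_of_continuousOn (hφ'c.mono ?_)
    intro y hy
    rw [mem_closedBall, dist_zero_right] at hy
    rw [mem_ball, dist_zero_right, hεdef] at *
    linarith
  have hmemK : ∀ x : ℂ, x ∈ ball z₀ ε → ∀ t : ℝ, |t| ≤ 1 →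
      (t:ℂ) * x ∈ closedBall (0:ℂ) (‖z₀‖ + ε) := by
    intro x hx t ht
    have h3 : ‖(t:ℂ) * x‖ ≤ ‖x‖ := by
      rw [norm_mul, Complex.norm_real, Real.norm_eq_abs]
      nlinarith [norm_nonneg x, abs_nonneg t]
    have := hxball x hx
    rw [mem_closedBall, dist_zero_right]
    linarith
  have hC1nn : 0 ≤ C1 := le_trans (norm_nonneg _) (hC1 0 (by simp [mem_closedBall]; positivity))
  -- the main application
  have key := intervalIntegral.hasDerivAt_integral_of_dominated_loc_of_deriv_le
    (μ := volume) (a := (0:ℝ)) (b := 1)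
    (F := fun (x : ℂ) (t : ℝ) => x * φ ((t:ℂ) * x))
    (F' := fun (x : ℂ) (t : ℝ) => 1 * φ ((t:ℂ) * x) + x * (deriv φ ((t:ℂ) * x) * (t:ℂ)))
    (x₀ := z₀) (bound := fun _ => C1 + (‖z₀‖ + ε) * C2) (ball_mem_nhds z₀ hεpos) ?_ ?_ ?_ ?_ ?_ ?_
  case _ =>
    -- conclude
    have hψ : ∀ t ∈ uIcc (0:ℝ) 1, HasDerivAt (fun s : ℝ => (s:ℂ) * φ ((s:ℂ)*z₀))
        (1 * φ ((t:ℂ) * z₀) + (t:ℂ) * (deriv φ ((t:ℂ)*z₀) * z₀)) t := by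
      intro t ht
      rw [uIcc_of_le (by norm_num)] at ht
      have htabs : |t| ≤ 1 := abs_le.mpr ⟨by linarith [ht.1], ht.2⟩
      have hmem : (t:ℂ) * z₀ ∈ ball (0:ℂ) R := by
        rw [mem_ball, dist_zero_right]
        have : ‖(t:ℂ) * z₀‖ ≤ ‖z₀‖ := by
          rw [norm_mul, Complex.norm_real, Real.norm_eq_abs]
          nlinarith [norm_nonneg z₀, abs_nonneg t]
        linarith
      have hd : DifferentiableAt ℂ φ ((t:ℂ)*z₀) := hφ.differentiableAt (isOpen_ball.mem_nhds hmem)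
      have h1 : HasDerivAt (fun w : ℂ => φ (w*z₀)) (deriv φ ((t:ℂ)*z₀) * z₀) (t:ℂ) := by
        have hinner : HasDerivAt (fun w : ℂ => w*z₀) z₀ (t:ℂ) := by
          simpa using (hasDerivAt_id ((t:ℂ))).mul_const z₀
        exact (hd.hasDerivAt).comp (t:ℂ) hinner
      have h2 : HasDerivAt (fun w : ℂ => w * φ (w*z₀))
          (1 * φ ((t:ℂ) * z₀) + (t:ℂ) * (deriv φ ((t:ℂ)*z₀) * z₀)) (t:ℂ) :=
        (hasDerivAt_id ((t:ℂ))).mul h1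
      have h3 := h2.comp_ofReal
      simpa using h3
    have hint : IntervalIntegrable (fun t : ℝ => 1 * φ ((t:ℂ) * z₀) + (t:ℂ) * (deriv φ ((t:ℂ)*z₀) * z₀))
        volume 0 1 := by
      apply ContinuousOn.intervalIntegrable
      have hmapsTo : MapsTo (fun t : ℝ => (t:ℂ) * z₀) (uIcc (0:ℝ) 1) (ball (0:ℂ) R) := by
        intro t ht
        rw [uIcc_of_le (by norm_num)] at ht
        have htabs : |t| ≤ 1 := abs_le.mpr ⟨by linarith [ht.1], ht.2⟩
        rw [mem_ball, dist_zero_right]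
        have : ‖(t:ℂ) * z₀‖ ≤ ‖z₀‖ := by
          rw [norm_mul, Complex.norm_real, Real.norm_eq_abs]
          nlinarith [norm_nonneg z₀, abs_nonneg t]
        linarith
      have hc : ContinuousOn (fun t : ℝ => (t:ℂ) * z₀) (uIcc (0:ℝ) 1) :=
        (Complex.continuous_ofReal.mul continuous_const).continuousOn
      exact (continuousOn_const.mul (hφc.comp hc hmapsTo)).add
        ((Complex.continuous_ofReal.continuousOn).mul ((hφ'c.comp hc hmapsTo).mul continuousOn_const))
    have heq : (∫ t in (0:ℝ)..1, (1 * φ ((t:ℂ) * z₀) + z₀ * (deriv φ ((t:ℂ) * z₀) * (t:ℂ)))) = φ z₀ := by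
      rw [intervalIntegral.integral_congr
        (g := fun t : ℝ => 1 * φ ((t:ℂ) * z₀) + (t:ℂ) * (deriv φ ((t:ℂ)*z₀) * z₀)) (fun t _ => by ring)]
      rw [intervalIntegral.integral_eq_sub_of_hasDerivAt hψ hint]
      simp
    exact heq ▸ key.2
  case _ =>
    -- hF_meas
    filter_upwards [ball_mem_nhds z₀ hεpos] with x hx
    apply ContinuousOn.aestronglyMeasurable _ measurableSet_uIoc
    have hmapsTo : MapsTo (fun t : ℝ => (t:ℂ) * x) (Set.uIoc (0:ℝ) 1) (ball (0:ℂ) R) := by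
      intro t ht
      rw [uIoc_of_le (by norm_num)] at ht
      exact hK x hx t (abs_le.mpr ⟨by linarith [ht.1], ht.2⟩)
    have hc : ContinuousOn (fun t : ℝ => (t:ℂ) * x) (Set.uIoc (0:ℝ) 1) :=
      (Complex.continuous_ofReal.mul continuous_const).continuousOn
    exact continuousOn_const.mul (hφc.comp hc hmapsTo)
  case _ =>
    -- hF_int
    apply ContinuousOn.intervalIntegrable
    have hmapsTo : MapsTo (fun t : ℝ => (t:ℂ) * z₀) (uIcc (0:ℝ) 1) (ball (0:ℂ) R) := by
      intro t ht
      rw [uIcc_of_le (by norm_num)] at ht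
      exact hK z₀ (mem_ball_self hεpos) t (abs_le.mpr ⟨by linarith [ht.1], ht.2⟩)
    have hc : ContinuousOn (fun t : ℝ => (t:ℂ) * z₀) (uIcc (0:ℝ) 1) :=
      (Complex.continuous_ofReal.mul continuous_const).continuousOn
    exact continuousOn_const.mul (hφc.comp hc hmapsTo)
  case _ =>
    -- hF'_meas
    apply ContinuousOn.aestronglyMeasurable _ measurableSet_uIoc
    have hmapsTo : MapsTo (fun t : ℝ => (t:ℂ) * z₀) (Set.uIoc (0:ℝ) 1) (ball (0:ℂ) R) := by
      intro t ht
      rw [uIoc_of_le (by norm_num)] at ht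
      exact hK z₀ (mem_ball_self hεpos) t (abs_le.mpr ⟨by linarith [ht.1], ht.2⟩)
    have hc : ContinuousOn (fun t : ℝ => (t:ℂ) * z₀) (Set.uIoc (0:ℝ) 1) :=
      (Complex.continuous_ofReal.mul continuous_const).continuousOn
    exact (continuousOn_const.mul (hφc.comp hc hmapsTo)).add
      (continuousOn_const.mul ((hφ'c.comp hc hmapsTo).mul
        (Complex.continuous_ofReal.continuousOn)))
  case _ =>
    -- h_bound
    have hC2nn : 0 ≤ C2 := le_trans (norm_nonneg _) (hC2 0 (by
      simp only [mem_closedBall, dist_zero_right, norm_zero]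
      positivity))
    refine MeasureTheory.ae_of_all _ ?_
    intro t ht x hx
    rw [uIoc_of_le (by norm_num)] at ht
    have htabs : |t| ≤ 1 := abs_le.mpr ⟨by linarith [ht.1], ht.2⟩
    have hmem := hmemK x hx t htabs
    have hb1 : ‖φ ((t:ℂ)*x)‖ ≤ C1 := hC1 _ hmem
    have hb2 : ‖deriv φ ((t:ℂ)*x)‖ ≤ C2 := hC2 _ hmem
    have hxn : ‖x‖ ≤ ‖z₀‖ + ε := le_of_lt (hxball x hx)
    calc ‖1 * φ ((t:ℂ)*x) + x * (deriv φ ((t:ℂ)*x) * (t:ℂ))‖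
        ≤ ‖1 * φ ((t:ℂ)*x)‖ + ‖x * (deriv φ ((t:ℂ)*x) * (t:ℂ))‖ := norm_add_le _ _
      _ = ‖φ ((t:ℂ)*x)‖ + ‖x‖ * (‖deriv φ ((t:ℂ)*x)‖ * |t|) := by
          rw [one_mul, norm_mul, norm_mul, Complex.norm_real, Real.norm_eq_abs]
      _ ≤ C1 + (‖z₀‖ + ε) * C2 := by
          have h0x : (0:ℝ) ≤ ‖x‖ := norm_nonneg _
          have h0d : (0:ℝ) ≤ ‖deriv φ ((t:ℂ)*x)‖ := norm_nonneg _
          have h0t : (0:ℝ) ≤ |t| := abs_nonneg _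
          have hs1 : ‖deriv φ ((t:ℂ)*x)‖ * |t| ≤ C2 := by nlinarith
          have hs2 : ‖x‖ * (‖deriv φ ((t:ℂ)*x)‖ * |t|) ≤ (‖z₀‖ + ε) * C2 :=
            mul_le_mul hxn hs1 (by positivity) (by positivity)
          linarith
  case _ =>
    -- bound_integrable
    exact intervalIntegrable_const
  case _ =>
    -- h_diff
    refine MeasureTheory.ae_of_all _ ?_
    intro t ht x hx
    rw [uIoc_of_le (by norm_num)] at ht
    have htabs : |t| ≤ 1 := abs_le.mpr ⟨by linarith [ht.1], ht.2⟩
    have hmem := hK x hx t htabs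
    have hd : DifferentiableAt ℂ φ ((t:ℂ)*x) := hφ.differentiableAt (isOpen_ball.mem_nhds hmem)
    have h1 : HasDerivAt (fun y : ℂ => φ ((t:ℂ)*y)) (deriv φ ((t:ℂ)*x) * (t:ℂ)) x := by
      have hinner : HasDerivAt (fun y : ℂ => (t:ℂ)*y) (t:ℂ) x := by
        simpa using (hasDerivAt_id x).const_mul (t:ℂ)
      exact (hd.hasDerivAt).comp x hinner
    exact (hasDerivAt_id x).mul h1


lemma exists_log {F : ℂ → ℂ} {R : ℝ} (hR : 0 < R)
    (hF : DifferentiableOn ℂ F (ball 0 R))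
    (hne : ∀ z ∈ ball (0:ℂ) R, F z ≠ 0) :
    ∃ L : ℂ → ℂ, (∀ z ∈ ball (0:ℂ) R, HasDerivAt L (deriv F z / F z) z) ∧
      L 0 = Complex.log (F 0) ∧ ∀ z ∈ ball (0:ℂ) R, Complex.exp (L z) = F z := by
  have h0 : (0:ℂ) ∈ ball (0:ℂ) R := by simpa using hR
  have hF' : DifferentiableOn ℂ (deriv F) (ball 0 R) :=
    ((hF.analyticOnNhd isOpen_ball).deriv).differentiableOn
  set φ : ℂ → ℂ := fun z => deriv F z / F z with hφdef
  have hφ : DifferentiableOn ℂ φ (ball 0 R) := hF'.div hF hne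
  set L : ℂ → ℂ := fun z => Complex.log (F 0) + ∫ t in (0:ℝ)..1, z * φ ((t:ℂ) * z) with hLdef
  have hL : ∀ z ∈ ball (0:ℂ) R, HasDerivAt L (φ z) z := by
    intro z hz
    exact (hasPrimitive hφ hz).const_add _
  have hL0 : L 0 = Complex.log (F 0) := by
    simp [hLdef]
  refine ⟨L, hL, hL0, ?_⟩
  set G : ℂ → ℂ := fun z => F z * Complex.exp (-L z) with hGdef
  have hGconst : ∀ z ∈ ball (0:ℂ) R, G z = G 0 := by
    intro z hz
    refine (convex_ball (0:ℂ) R).is_const_of_fderivWithin_eq_zero (𝕜 := ℂ) (f := G) ?_ ?_ hz h0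
    · intro w hw
      exact ((hF.differentiableAt (isOpen_ball.mem_nhds hw)).mul
        (((hL w hw).differentiableAt.neg).cexp)).differentiableWithinAt
    · intro w hw
      have hGw : HasDerivAt G 0 w := by
        have hFw : HasDerivAt F (deriv F w) w :=
          (hF.differentiableAt (isOpen_ball.mem_nhds hw)).hasDerivAt
        have hEw : HasDerivAt (fun z => Complex.exp (-L z)) (Complex.exp (-L w) * (-φ w)) w := by
          have := ((hL w hw).neg).cexp
          simpa [mul_comm] using this
        have := hFw.mul hEw
        have heq : deriv F w * Complex.exp (-L w) + F w * (Complex.exp (-L w) * (-φ w)) = 0 := by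
          rw [hφdef]
          field_simp [hne w hw]
          ring
        rwa [heq] at this
      have h1 : fderivWithin ℂ G (ball 0 R) w = fderiv ℂ G w :=
        fderivWithin_of_isOpen isOpen_ball hw
      rw [h1, hGw.hasFDerivAt.fderiv]
      ext v
      simp
  intro z hz
  have hG0 : G 0 = 1 := by
    rw [hGdef]
    simp only []
    rw [hL0, Complex.exp_neg, Complex.exp_log (hne 0 h0)]
    field_simp [hne 0 h0]
  have := hGconst z hz
  rw [hG0, hGdef] at this
  simp only [] at this
  have hexp := Complex.exp_ne_zero (L z)
  rw [Complex.exp_neg] at this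
  field_simp at this
  exact this.symm


lemma ball_in_image {f : ℂ → ℂ} {a : ℂ} {s : ℝ} (hs : 0 < s)
    (hf : DifferentiableOn ℂ f (ball a s))
    (hbound : ∀ z ∈ ball a s, ‖deriv f z‖ ≤ 2 * ‖deriv f a‖) :
    closedBall (f a) (s * ‖deriv f a‖ / 64) ⊆ f '' ball a s := by
  set μ : ℝ := ‖deriv f a‖ with hμdef
  rcases eq_or_lt_of_le (norm_nonneg (deriv f a)) with hμ0 | hμpos
  · rw [hμdef, ← hμ0]
    simp only [mul_zero, zero_div, closedBall_zero]
    intro w hw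
    rw [mem_singleton_iff] at hw
    exact hw ▸ ⟨a, mem_ball_self hs, rfl⟩
  rw [← hμdef] at hμpos
  have hμne : deriv f a ≠ 0 := by
    intro h
    rw [hμdef, h, norm_zero] at hμpos
    exact lt_irrefl _ hμpos
  -- Schwarz applied to deriv f
  have hg : DifferentiableOn ℂ (deriv f) (ball a s) :=
    ((hf.analyticOnNhd isOpen_ball).deriv).differentiableOn
  have hmaps : MapsTo (deriv f) (ball a s) (ball (deriv f a) (4 * μ)) := by
    intro z hz
    rw [mem_ball]
    calc dist (deriv f z) (deriv f a) ≤ ‖deriv f z‖ + ‖deriv f a‖ := by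
          rw [dist_eq_norm]; exact norm_sub_le _ _
      _ ≤ 2 * μ + μ := by
          have := hbound z hz; rw [hμdef] at this ⊢; linarith
      _ < 4 * μ := by linarith
  have hschwarz : ∀ z ∈ ball a s, dist (deriv f z) (deriv f a) ≤ 4 * μ / s * dist z a :=
    fun z hz => Complex.dist_le_div_mul_dist_of_mapsTo_ball hg (hmaps.mono_right ball_subset_closedBall) hz
  -- approximates linear on ball a (s/16)
  set A : ℂ ≃L[ℂ] ℂ := ContinuousLinearEquiv.unitsEquivAut (R := ℂ) (Units.mk0 (deriv f a) hμne)
    with hAdef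
  have hAapp : ∀ x : ℂ, (A : ℂ →L[ℂ] ℂ) x = x * deriv f a := by
    intro x
    rw [hAdef, ContinuousLinearEquiv.coe_coe, ContinuousLinearEquiv.unitsEquivAut_apply]
    rfl
  have hAsymm : ∀ x : ℂ, (A.symm : ℂ →L[ℂ] ℂ) x = x * (deriv f a)⁻¹ := by
    intro x
    rw [hAdef, ContinuousLinearEquiv.coe_coe, ContinuousLinearEquiv.unitsEquivAut_apply_symm]
    rfl
  have hApprox : ApproximatesLinearOn f (A : ℂ →L[ℂ] ℂ) (ball a (s/16)) (Real.toNNReal (μ/4)) := by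
    intro x hx y hy
    have hsub : ball a (s/16) ⊆ ball a s := ball_subset_ball (by linarith)
    have hderivb : ∀ z ∈ ball a (s/16), ‖deriv f z - deriv f a‖ ≤ μ / 4 := by
      intro z hz
      have h1 := hschwarz z (hsub hz)
      rw [dist_eq_norm] at h1
      have h2 : dist z a ≤ s / 16 := le_of_lt (mem_ball.mp hz)
      calc ‖deriv f z - deriv f a‖ ≤ 4 * μ / s * dist z a := h1
        _ ≤ 4 * μ / s * (s/16) := by
            apply mul_le_mul_of_nonneg_left h2; positivity
        _ = μ / 4 := by field_simp; ring
    have hq : ∀ z ∈ ball a (s/16),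
        HasDerivWithinAt (fun w => f w - w * deriv f a) (deriv f z - deriv f a) (ball a (s/16)) z := by
      intro z hz
      have h1 : HasDerivAt f (deriv f z) z :=
        (hf.differentiableAt (isOpen_ball.mem_nhds (hsub hz))).hasDerivAt
      have h2 := (h1.sub ((hasDerivAt_id z).mul_const (deriv f a))).hasDerivWithinAt
        (s := ball a (s/16))
      simp only [id, one_mul] at h2
      exact h2
    have := (convex_ball a (s/16)).norm_image_sub_le_of_norm_hasDerivWithin_le hq hderivb hy hx
    rw [hAapp (x - y)]
    have hrw : f x - x * deriv f a - (f y - y * deriv f a) = f x - f y - (x - y) * deriv f a := by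
      ring
    rw [hrw] at this
    calc ‖f x - f y - (x - y) * deriv f a‖ ≤ μ / 4 * ‖x - y‖ := this
      _ = (Real.toNNReal (μ/4) : ℝ) * ‖x - y‖ := by
          rw [Real.coe_toNNReal _ (by positivity)]
  have hAsnorm : ‖(A.symm : ℂ →L[ℂ] ℂ)‖ ≤ μ⁻¹ := by
    apply ContinuousLinearMap.opNorm_le_bound _ (by positivity)
    intro x
    rw [hAsymm x, norm_mul, norm_inv, ← hμdef, mul_comm]
  set f'symm := A.toNonlinearRightInverse with hfsdef
  have hsurj := hApprox.surjOn_closedBall_of_nonlinearRightInverse f'symm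
    (ε := s/32) (b := a) (by positivity)
    (by
      intro z hz
      rw [mem_closedBall] at hz
      rw [mem_ball]
      have : (0:ℝ) < s/32 := by positivity
      calc dist z a ≤ s/32 := hz
        _ < s/16 := by linarith)
  have hnpos : 0 < ‖(A.symm : ℂ →L[ℂ] ℂ)‖ := by
    have h3 := ContinuousLinearMap.le_opNorm (A.symm : ℂ →L[ℂ] ℂ) 1
    rw [hAsymm 1, one_mul, norm_one, mul_one] at h3
    have h5 : 0 < ‖(deriv f a)⁻¹‖ := norm_pos_iff.mpr (inv_ne_zero hμne)
    linarith
  have hnn : μ ≤ (f'symm.nnnorm : ℝ)⁻¹ := by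
    have h1 : (f'symm.nnnorm : ℝ) = ‖(A.symm : ℂ →L[ℂ] ℂ)‖ := rfl
    rw [h1]
    exact (le_inv_comm₀ hμpos hnpos).mpr hAsnorm
  intro w hw
  have hrad : s * μ / 64 ≤ ((f'symm.nnnorm : ℝ)⁻¹ - (Real.toNNReal (μ/4) : ℝ)) * (s/32) := by
    have hc : (Real.toNNReal (μ/4) : ℝ) = μ/4 := Real.coe_toNNReal _ (by positivity)
    rw [hc]
    have : μ - μ/4 ≥ (3/4) * μ := by linarith
    nlinarith
  have hw2 : w ∈ closedBall (f a) (((f'symm.nnnorm : ℝ)⁻¹ - (Real.toNNReal (μ/4) : ℝ)) * (s/32)) := by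
    rw [mem_closedBall] at hw ⊢
    linarith
  obtain ⟨x, hx, hfx⟩ := hsurj hw2
  exact ⟨x, by
    rw [mem_closedBall] at hx
    rw [mem_ball]
    have : (0:ℝ) < s/32 := by positivity
    calc dist x a ≤ s/32 := hx
      _ < s := by linarith, hfx⟩


lemma landau {f : ℂ → ℂ} {z₀ : ℂ} {r d : ℝ} (hr : 0 < r) (hd : 0 ≤ d)
    (hf : DifferentiableOn ℂ f (ball z₀ r))
    (hdense : ∀ w : ℂ, ∃ ω, ω ∉ f '' (ball z₀ r) ∧ dist ω w ≤ d) :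
    ‖deriv f z₀‖ ≤ 256 * d / r := by
  have hsub : closedBall z₀ (r/2) ⊆ ball z₀ r := by
    intro z hz
    rw [mem_closedBall] at hz
    rw [mem_ball]
    linarith
  have hg : DifferentiableOn ℂ (deriv f) (ball z₀ r) :=
    ((hf.analyticOnNhd isOpen_ball).deriv).differentiableOn
  have hφc : ContinuousOn (fun z => (r/2 - dist z z₀) * ‖deriv f z‖) (closedBall z₀ (r/2)) :=
    ((continuous_const.sub (continuous_id.dist continuous_const)).continuousOn).mul
      ((hg.continuousOn.mono hsub).norm)
  obtain ⟨aa, haK, hamax⟩ := (isCompact_closedBall z₀ (r/2)).exists_isMaxOn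
    ⟨z₀, by simp [mem_closedBall]; positivity⟩ hφc
  set μ : ℝ := ‖deriv f aa‖ with hμdef
  set ss : ℝ := (r/2 - dist aa z₀)/2 with hssdef
  have hdaa : dist aa z₀ ≤ r/2 := mem_closedBall.mp haK
  have hss0 : 0 ≤ ss := by rw [hssdef]; linarith
  have hkey1 : r/2 * ‖deriv f z₀‖ ≤ 2 * ss * μ := by
    have := hamax (mem_closedBall_self (by linarith))
    simp only [dist_self, sub_zero] at this
    calc r/2 * ‖deriv f z₀‖ = (r/2 - dist z₀ z₀) * ‖deriv f z₀‖ := by simp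
      _ ≤ (r/2 - dist aa z₀) * ‖deriv f aa‖ := this
      _ = 2 * ss * μ := by rw [hssdef, hμdef]; ring
  have hkey2 : ss * μ ≤ 64 * d := by
    rcases eq_or_lt_of_le hss0 with hss | hsspos
    · rw [← hss, zero_mul]; linarith
    -- ball aa ss ⊆ ball z₀ r and bound 2μ there
    have hball : ball aa ss ⊆ ball z₀ r := by
      intro z hz
      rw [mem_ball] at hz ⊢
      have := dist_triangle z aa z₀
      rw [hssdef] at hz
      linarith
    have hbound : ∀ z ∈ ball aa ss, ‖deriv f z‖ ≤ 2 * ‖deriv f aa‖ := by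
      intro z hz
      rw [mem_ball] at hz
      have hzK : z ∈ closedBall z₀ (r/2) := by
        rw [mem_closedBall]
        have := dist_triangle z aa z₀
        rw [hssdef] at hz
        linarith
      have hmax := hamax hzK
      simp only [] at hmax
      have hlow : ss ≤ r/2 - dist z z₀ := by
        have := dist_triangle z aa z₀
        rw [hssdef] at hz ⊢
        rw [mem_closedBall] at hzK
        linarith
      have h2 : (r/2 - dist z z₀) * ‖deriv f z‖ ≤ (r/2 - dist aa z₀) * ‖deriv f aa‖ := hmax
      have h3 : ss * ‖deriv f z‖ ≤ (r/2 - dist z z₀) * ‖deriv f z‖ :=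
        mul_le_mul_of_nonneg_right hlow (norm_nonneg _)
      have h4 : (r/2 - dist aa z₀) = 2 * ss := by rw [hssdef]; ring
      rw [h4] at h2
      have h5 : ss * ‖deriv f z‖ ≤ 2 * ss * ‖deriv f aa‖ := le_trans h3 h2
      nlinarith [norm_nonneg (deriv f z), norm_nonneg (deriv f aa)]
    have himg := ball_in_image hsspos (hf.mono hball) hbound
    obtain ⟨ω, hω1, hω2⟩ := hdense (f aa)
    have hω3 : ω ∉ closedBall (f aa) (ss * μ / 64) := by
      intro hc
      exact hω1 (image_mono hball (himg hc))
    rw [mem_closedBall, not_le] at hω3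
    rw [hμdef]
    nlinarith
  have : r/2 * ‖deriv f z₀‖ ≤ 128 * d := by nlinarith
  rw [le_div_iff₀ hr]
  nlinarith


noncomputable def xseq (n : ℕ) : ℝ := Real.log (Real.sqrt (n+1) + Real.sqrt n)

lemma xseq_zero : xseq 0 = 0 := by
  simp [xseq]

lemma xseq_nonneg (n : ℕ) : 0 ≤ xseq n := by
  apply Real.log_nonneg
  have h1 : (1:ℝ) ≤ Real.sqrt (n+1) := by
    have := Real.sqrt_le_sqrt (show (1:ℝ) ≤ (n:ℝ)+1 by linarith [Nat.cast_nonneg (α := ℝ) n])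
    rwa [Real.sqrt_one] at this
  linarith [Real.sqrt_nonneg (n:ℝ)]

lemma xseq_gap (n : ℕ) : xseq (n+1) ≤ xseq n + 1 := by
  have hpos : (0:ℝ) < Real.sqrt (n+1) + Real.sqrt n := by
    have : (0:ℝ) < Real.sqrt (n+1) := Real.sqrt_pos.mpr (by positivity)
    linarith [Real.sqrt_nonneg (n:ℝ)]
  have hkey : Real.sqrt (n+2) + Real.sqrt (n+1) ≤ Real.exp 1 * (Real.sqrt (n+1) + Real.sqrt n) := by
    have h1 : Real.sqrt ((n:ℝ)+2) ≤ Real.sqrt 2 * Real.sqrt ((n:ℝ)+1) := by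
      rw [← Real.sqrt_mul (by norm_num)]
      apply Real.sqrt_le_sqrt
      push_cast
      linarith
    have h2 : Real.sqrt 2 ≤ 1.5 := by
      rw [show (1.5:ℝ) = Real.sqrt (1.5^2) by rw [Real.sqrt_sq]; norm_num]
      apply Real.sqrt_le_sqrt
      norm_num
    have h3 : (2.5:ℝ) ≤ Real.exp 1 := by
      linarith [Real.exp_one_gt_d9]
    have h4 : (0:ℝ) ≤ Real.sqrt (n+1) := Real.sqrt_nonneg _
    have h5 : (0:ℝ) ≤ Real.sqrt n := Real.sqrt_nonneg _
    nlinarith [Real.exp_pos (1:ℝ)]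
  have : xseq (n+1) = Real.log (Real.sqrt ((n:ℝ)+2) + Real.sqrt ((n:ℝ)+1)) := by
    unfold xseq
    push_cast
    ring_nf
  rw [this, xseq]
  calc Real.log (Real.sqrt (n+2) + Real.sqrt (n+1))
      ≤ Real.log (Real.exp 1 * (Real.sqrt (n+1) + Real.sqrt n)) := by
        apply Real.log_le_log (by positivity) hkey
    _ = Real.log (Real.sqrt (n+1) + Real.sqrt n) + 1 := by
        rw [Real.log_mul (Real.exp_ne_zero 1) (ne_of_gt hpos), Real.log_exp]
        ring
  
lemma xseq_unbounded (T : ℝ) : ∃ n : ℕ, T ≤ xseq n := by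
  obtain ⟨n, hn⟩ := exists_nat_ge ((Real.exp T)^2)
  refine ⟨n, ?_⟩
  have h1 : Real.exp T ≤ Real.sqrt (n+1) := by
    rw [show Real.exp T = Real.sqrt ((Real.exp T)^2) by rw [Real.sqrt_sq (Real.exp_pos T).le]]
    apply Real.sqrt_le_sqrt
    linarith
  have h2 : Real.exp T ≤ Real.sqrt (n+1) + Real.sqrt n := by
    linarith [Real.sqrt_nonneg (n:ℝ)]
  calc T = Real.log (Real.exp T) := (Real.log_exp T).symm
    _ ≤ xseq n := Real.log_le_log (Real.exp_pos T) h2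

lemma xseq_dense (T : ℝ) (hT : 0 ≤ T) : ∃ n : ℕ, T ≤ xseq n ∧ xseq n ≤ T + 1 := by
  have hex : ∃ n : ℕ, T ≤ xseq n := xseq_unbounded T
  classical
  set n₀ := Nat.find hex with hn₀
  have h1 : T ≤ xseq n₀ := Nat.find_spec hex
  refine ⟨n₀, h1, ?_⟩
  rcases Nat.eq_zero_or_pos n₀ with h0 | hpos
  · rw [h0, xseq_zero]; linarith
  · have h2 : ¬ (T ≤ xseq (n₀ - 1)) := Nat.find_min hex (by omega)
    push_neg at h2
    have h3 : xseq (n₀ - 1 + 1) ≤ xseq (n₀ - 1) + 1 := xseq_gap _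
    rw [Nat.sub_add_cancel hpos] at h3
    linarith


lemma omitted_dense {u s t v : ℂ → ℂ}
    (hu : ∀ z ∈ ball (0:ℂ) 1, ∀ k : ℤ, u z ≠ (k:ℂ))
    (hs2 : ∀ z ∈ ball (0:ℂ) 1, (s z)^2 = u z)
    (ht2 : ∀ z ∈ ball (0:ℂ) 1, (t z)^2 = u z - 1)
    (hv : ∀ z ∈ ball (0:ℂ) 1, Complex.exp (v z) = s z - t z) :
    ∀ w : ℂ, ∃ ω, ω ∉ v '' (ball (0:ℂ) 1) ∧ dist ω w ≤ 2 := by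
  intro w
  obtain ⟨n, hn1, hn2⟩ := xseq_dense |w.re| (abs_nonneg _)
  set m : ℤ := round (w.im / Real.pi) with hmdef
  set ξ : ℝ := if 0 ≤ w.re then xseq n else -xseq n with hξdef
  set ω : ℂ := (ξ:ℂ) + (m:ℂ) * (Real.pi:ℂ) * Complex.I with hωdef
  have hωre : ω.re = ξ := by simp [hωdef]
  have hωim : ω.im = m * Real.pi := by simp [hωdef]
  refine ⟨ω, ?_, ?_⟩
  · rintro ⟨z, hz, hvz⟩
    apply hu z hz ((n:ℤ)+1)
    -- notation
    set r : ℝ := Real.sqrt (n+1) + Real.sqrt n with hrdef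
    set rr : ℝ := Real.sqrt (n+1) - Real.sqrt n with hrrdef
    have hsq : Real.sqrt ((n:ℝ)+1) ^ 2 = (n:ℝ)+1 := Real.sq_sqrt (by positivity)
    have hsq' : Real.sqrt (n:ℝ) ^ 2 = (n:ℝ) := Real.sq_sqrt (by positivity)
    have hrpos : 0 < r := by
      rw [hrdef]
      have : (0:ℝ) < Real.sqrt ((n:ℝ)+1) := Real.sqrt_pos.mpr (by positivity)
      linarith [Real.sqrt_nonneg (n:ℝ)]
    have hrrr : r * rr = 1 := by
      rw [hrdef, hrrdef]
      nlinarith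
    have hrrpos : 0 < rr := by
      rcases le_or_gt rr 0 with h | h
      · nlinarith
      · exact h
    have hrinv : r⁻¹ = rr := by
      field_simp
      linarith [hrrr]
    -- ε
    set ε : ℂ := Complex.exp ((m:ℂ) * (Real.pi:ℂ) * Complex.I) with hεdef
    have hεne : ε ≠ 0 := Complex.exp_ne_zero _
    have hε2 : ε^2 = 1 := by
      rw [hεdef, ← Complex.exp_nat_mul]
      rw [show ((2:ℕ):ℂ) * ((m:ℂ) * (Real.pi:ℂ) * Complex.I) = (m:ℂ) * (2 * (Real.pi:ℂ) * Complex.I) by push_cast; ring]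
      exact Complex.exp_int_mul_two_pi_mul_I m
    have hεinv : ε⁻¹ = ε := by
      have h : ε * ε = 1 := by rw [← sq]; exact hε2
      exact (eq_inv_of_mul_eq_one_left h).symm
    -- er
    set er : ℝ := Real.exp ξ with herdef
    have herpos : 0 < er := Real.exp_pos ξ
    have hersum : er + er⁻¹ = 2 * Real.sqrt ((n:ℝ)+1) := by
      rw [herdef, hξdef]
      by_cases hre : 0 ≤ w.re
      · rw [if_pos hre]
        have h1 : Real.exp (xseq n) = r := by
          rw [xseq, hrdef]
          exact Real.exp_log hrpos
        rw [h1, hrinv, hrdef, hrrdef]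
        ring
      · rw [if_neg hre]
        have h1 : Real.exp (-xseq n) = rr := by
          rw [xseq, Real.exp_neg]
          rw [show Real.log (Real.sqrt (↑n + 1) + Real.sqrt ↑n) = Real.log r by rw [hrdef]]
          rw [Real.exp_log hrpos, hrinv]
        rw [h1]
        have h2 : rr⁻¹ = r := by
          rw [← hrinv, inv_inv]
        rw [h2, hrdef, hrrdef]
        ring
    -- A
    have hA : s z - t z = (er:ℂ) * ε := by
      rw [← hv z hz, hvz, hωdef, Complex.exp_add, hεdef, herdef, Complex.ofReal_exp]
    have hAne : s z - t z ≠ 0 := by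
      rw [hA]
      exact mul_ne_zero (by exact_mod_cast ne_of_gt herpos) hεne
    have hprod : (s z - t z) * (s z + t z) = 1 := by
      have h1 := hs2 z hz
      have h2 := ht2 z hz
      ring_nf
      linear_combination h1 - h2
    have hsum : s z + t z = ((er:ℂ) * ε)⁻¹ := by
      rw [← hA]
      field_simp
      linear_combination hprod
    have h2s : 2 * s z = (er:ℂ) * ε + ((er:ℂ) * ε)⁻¹ := by
      linear_combination hA + hsum
    have hAinv : ((er:ℂ) * ε)⁻¹ = ((er⁻¹ : ℝ):ℂ) * ε := by
      rw [mul_inv, hεinv]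
      push_cast
      ring
    have h2s' : 2 * s z = ((er + er⁻¹ : ℝ):ℂ) * ε := by
      rw [h2s, hAinv]
      push_cast
      ring
    rw [hersum] at h2s'
    have hr2 : ((2 * Real.sqrt ((n:ℝ)+1))^2 : ℝ) = 4*((n:ℝ)+1) := by nlinarith [hsq]
    have hcast : (((2 * Real.sqrt ((n:ℝ)+1) : ℝ)) : ℂ)^2 = 4*((n:ℂ)+1) := by
      rw [← Complex.ofReal_pow, hr2]
      push_cast
      ring
    have hfin : 4 * u z = 4 * ((n:ℂ) + 1) := by
      have hc := hs2 z hz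
      have h1 : (((2 * Real.sqrt ((n:ℝ)+1) : ℝ)) : ℂ)^2 * ε^2 = 4 * u z := by
        calc (((2 * Real.sqrt ((n:ℝ)+1) : ℝ)) : ℂ)^2 * ε^2 = (2 * s z)^2 := by
              rw [h2s']; ring
          _ = 4 * u z := by linear_combination 4*hc
      rw [hε2, mul_one, hcast] at h1
      linear_combination -h1
    have : u z = (n:ℂ) + 1 := by
      linear_combination hfin / 4
    rw [this]
    push_cast
    ring
  · -- distance
    have hre : |ω.re - w.re| ≤ 1 := by
      rw [hωre, hξdef]
      by_cases h : 0 ≤ w.re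
      · rw [if_pos h]
        rw [abs_of_nonneg h] at hn1 hn2
        rw [abs_le]
        constructor <;> linarith
      · push_neg at h
        rw [if_neg (not_le.mpr h)]
        rw [abs_of_neg h] at hn1 hn2
        rw [abs_le]
        constructor <;> linarith
    have him : |ω.im - w.im| ≤ Real.pi / 2 := by
      rw [hωim]
      have h1 : |w.im / Real.pi - m| ≤ 1/2 := by
        rw [hmdef]
        exact abs_sub_round _
      have h2 : (m:ℝ) * Real.pi - w.im = -((w.im / Real.pi - m) * Real.pi) := by
        field_simp
        ring
      rw [h2, abs_neg, abs_mul, abs_of_pos Real.pi_pos]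
      nlinarith [Real.pi_pos]
    rw [Complex.dist_eq]
    have hsq : ‖ω - w‖ ^ 2 = (ω.re - w.re)^2 + (ω.im - w.im)^2 := by
      rw [Complex.sq_norm, Complex.normSq_apply, Complex.sub_re, Complex.sub_im]
      ring
    have hπ : Real.pi ≤ 3.15 := by linarith [Real.pi_lt_d2]
    have h4 : ‖ω - w‖ ^ 2 ≤ 4 := by
      rw [hsq]
      have e1 : (ω.re - w.re)^2 ≤ 1 := by nlinarith [abs_nonneg (ω.re - w.re), sq_abs (ω.re - w.re)]
      have e2 : (ω.im - w.im)^2 ≤ (Real.pi/2)^2 := by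
        nlinarith [abs_nonneg (ω.im - w.im), sq_abs (ω.im - w.im), Real.pi_pos]
      nlinarith [Real.pi_pos]
    nlinarith [norm_nonneg (ω - w)]


lemma abs_rlog_le {x : ℝ} (h1 : 1/3 ≤ x) (h2 : x ≤ 3) : |Real.log x| ≤ 2 := by
  have hlog3 : Real.log 3 ≤ 2 := by
    have := Real.log_le_sub_one_of_pos (show (0:ℝ) < 3 by norm_num)
    linarith
  rw [abs_le]
  constructor
  · have := Real.log_le_log (by norm_num : (0:ℝ) < 1/3) h1
    rw [show (1/3 : ℝ) = 3⁻¹ by norm_num, Real.log_inv] at this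
    linarith
  · have := Real.log_le_log (by linarith) h2
    linarith

lemma abs_clog_le {ζ : ℂ} (h1 : 1/3 ≤ ‖ζ‖) (h2 : ‖ζ‖ ≤ 3) :
    ‖Complex.log ζ‖ ≤ 2 + Real.pi := by
  have hre : |(Complex.log ζ).re| = |Real.log (‖ζ‖)| := by rw [Complex.log_re]
  have him : |(Complex.log ζ).im| ≤ Real.pi := by
    rw [Complex.log_im]
    exact Complex.abs_arg_le_pi ζ
  have := Complex.norm_le_abs_re_add_abs_im (Complex.log ζ)
  have h3 := abs_rlog_le h1 h2
  rw [hre] at this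
  linarith

lemma schottky {g : ℂ → ℂ} {ρ : ℝ} (hρ : 0 < ρ) (hρ1 : ρ < 1)
    (hg : DifferentiableOn ℂ g (ball 0 1))
    (hg0 : ∀ z ∈ ball (0:ℂ) 1, g z ≠ 0) (hg1 : ∀ z ∈ ball (0:ℂ) 1, g z ≠ 1)
    (hb1 : 1/3 ≤ ‖g 0‖) (hb2 : ‖g 0‖ ≤ 1) :
    ∀ z ∈ closedBall (0:ℂ) ρ, ‖g z‖ ≤
      Real.exp (2 * Real.pi * Real.exp (2 * (6 + 512 / (1 - ρ)))) := by
  have h0mem : (0:ℂ) ∈ ball (0:ℂ) 1 := mem_ball_self one_pos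
  have hπ3 : 3 < Real.pi := Real.pi_gt_three
  obtain ⟨L, hLd, hL0, hLexp⟩ := exists_log one_pos hg hg0
  set c2 : ℂ := ((2*Real.pi : ℝ) : ℂ) * Complex.I with hc2def
  have hc2ne : c2 ≠ 0 := by
    rw [hc2def]
    apply mul_ne_zero _ Complex.I_ne_zero
    simp [Real.pi_ne_zero]
  have hc2abs : ‖c2‖ = 2*Real.pi := by
    rw [hc2def]
    simp [abs_of_pos Real.pi_pos, Real.pi_pos.le]
  set u : ℂ → ℂ := fun z => L z / c2 with hudef
  have hLu : ∀ z, L z = c2 * u z := by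
    intro z
    rw [hudef]
    field_simp
  have hudiff : DifferentiableOn ℂ u (ball 0 1) := fun z hz =>
    (((hLd z hz).differentiableAt).div_const c2).differentiableWithinAt
  have huint : ∀ z ∈ ball (0:ℂ) 1, ∀ k : ℤ, u z ≠ (k:ℂ) := by
    intro z hz k h
    apply hg1 z hz
    rw [← hLexp z hz, hLu z, h]
    rw [show c2 * (k:ℂ) = (k:ℂ) * (2 * (Real.pi:ℂ) * Complex.I) by rw [hc2def]; push_cast; ring]
    exact Complex.exp_int_mul_two_pi_mul_I k
  have hu0 : ‖u 0‖ ≤ 1 := by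
    have h1 : ‖L 0‖ ≤ 2 + Real.pi := by
      rw [hL0]
      exact abs_clog_le hb1 (by linarith)
    rw [hudef]
    simp only [norm_div, hc2abs]
    rw [div_le_one (by positivity)]
    linarith
  have hune0 : ∀ z ∈ ball (0:ℂ) 1, u z ≠ 0 := by
    intro z hz h
    exact huint z hz 0 (by simpa using h)
  have hune1 : ∀ z ∈ ball (0:ℂ) 1, u z - 1 ≠ 0 := by
    intro z hz h
    apply huint z hz 1
    push_cast
    linear_combination h
  -- square roots
  obtain ⟨L₁, hL₁d, hL₁0, hL₁exp⟩ := exists_log one_pos hudiff hune0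
  set sf : ℂ → ℂ := fun z => Complex.exp (L₁ z / 2) with hsfdef
  have hs2 : ∀ z ∈ ball (0:ℂ) 1, (sf z)^2 = u z := by
    intro z hz
    rw [hsfdef]
    simp only []
    rw [← Complex.exp_nat_mul]
    rw [show ((2:ℕ):ℂ) * (L₁ z / 2) = L₁ z by push_cast; ring]
    exact hL₁exp z hz
  have hsdiff : DifferentiableOn ℂ sf (ball 0 1) := fun z hz =>
    ((((hL₁d z hz).differentiableAt).div_const 2).cexp).differentiableWithinAt
  have habs_exp_half : ∀ w : ℂ, ‖Complex.exp (w / 2)‖ = Real.exp (w.re / 2) := by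
    intro w
    rw [Complex.norm_exp]
    congr 1
    rw [show (2:ℂ) = ((2:ℝ):ℂ) by norm_num, Complex.div_ofReal_re]
  have hs0 : ‖sf 0‖ ≤ 1 := by
    rw [hsfdef]
    simp only []
    rw [habs_exp_half, hL₁0, Complex.log_re]
    have : Real.log (‖u 0‖) ≤ 0 := Real.log_nonpos (by positivity) hu0
    calc Real.exp (Real.log (‖u 0‖) / 2) ≤ Real.exp 0 := by
          apply Real.exp_le_exp.mpr; linarith
      _ = 1 := Real.exp_zero
  have hu1diff : DifferentiableOn ℂ (fun z => u z - 1) (ball 0 1) :=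
    hudiff.sub (differentiableOn_const 1)
  obtain ⟨L₂, hL₂d, hL₂0, hL₂exp⟩ := exists_log one_pos hu1diff hune1
  set tf : ℂ → ℂ := fun z => Complex.exp (L₂ z / 2) with htfdef
  have ht2 : ∀ z ∈ ball (0:ℂ) 1, (tf z)^2 = u z - 1 := by
    intro z hz
    rw [htfdef]
    simp only []
    rw [← Complex.exp_nat_mul]
    rw [show ((2:ℕ):ℂ) * (L₂ z / 2) = L₂ z by push_cast; ring]
    exact hL₂exp z hz
  have htdiff : DifferentiableOn ℂ tf (ball 0 1) := fun z hz =>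
    ((((hL₂d z hz).differentiableAt).div_const 2).cexp).differentiableWithinAt
  have ht0 : ‖tf 0‖ ≤ 3/2 := by
    rw [htfdef]
    simp only []
    rw [habs_exp_half, hL₂0, Complex.log_re]
    set q := Real.exp (Real.log (‖u 0 - 1‖) / 2) with hqdef
    have hqpos : 0 < q := Real.exp_pos _
    have habs1 : ‖u 0 - 1‖ ≤ 2 := by
      calc ‖u 0 - 1‖ ≤ ‖u 0‖ + ‖(1:ℂ)‖ := by
            have := norm_sub_le (u 0) 1
            simpa using this
        _ ≤ 2 := by
            have : ‖(1:ℂ)‖ = 1 := by simp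
            rw [this]; linarith
    have hq2 : q^2 = ‖u 0 - 1‖ := by
      rw [hqdef, ← Real.exp_nat_mul]
      rw [show ((2:ℕ):ℝ) * (Real.log (‖u 0 - 1‖) / 2) = Real.log (‖u 0 - 1‖) by push_cast; ring]
      exact Real.exp_log (norm_pos_iff.mpr (hune1 0 h0mem))
    nlinarith
  -- difference
  have hprod : ∀ z ∈ ball (0:ℂ) 1, (sf z - tf z) * (sf z + tf z) = 1 := by
    intro z hz
    have h1 := hs2 z hz
    have h2 := ht2 z hz
    linear_combination h1 - h2
  have hwne : ∀ z ∈ ball (0:ℂ) 1, sf z - tf z ≠ 0 := by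
    intro z hz h
    have := hprod z hz
    rw [h, zero_mul] at this
    exact zero_ne_one this
  have hwdiff : DifferentiableOn ℂ (fun z => sf z - tf z) (ball 0 1) := hsdiff.sub htdiff
  obtain ⟨L₃, hL₃d, hL₃0, hL₃exp⟩ := exists_log one_pos hwdiff hwne
  have hL₃diff : DifferentiableOn ℂ L₃ (ball 0 1) := fun z hz =>
    ((hL₃d z hz).differentiableAt).differentiableWithinAt
  -- |L₃ 0| ≤ 6
  have hw0u : ‖sf 0 - tf 0‖ ≤ 3 := by
    calc ‖sf 0 - tf 0‖ ≤ ‖sf 0‖ + ‖tf 0‖ := by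
          have := norm_sub_le (sf 0) (tf 0)
          simpa using this
      _ ≤ 3 := by linarith
  have hw0l : 1/3 ≤ ‖sf 0 - tf 0‖ := by
    have h1 := hprod 0 h0mem
    have h2 : ‖sf 0 - tf 0‖ * ‖sf 0 + tf 0‖ = 1 := by
      rw [← norm_mul, h1, norm_one]
    have h3 : ‖sf 0 + tf 0‖ ≤ 3 := by
      calc ‖sf 0 + tf 0‖ ≤ ‖sf 0‖ + ‖tf 0‖ :=
            norm_add_le _ _
        _ ≤ 3 := by linarith
    have h4 : 0 < ‖sf 0 + tf 0‖ := by
      rcases eq_or_lt_of_le (norm_nonneg (sf 0 + tf 0)) with h | h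
      · rw [← h, mul_zero] at h2; norm_num at h2
      · exact h
    rw [← h2]
    have h5 : 0 < ‖sf 0 - tf 0‖ := by
      rcases eq_or_lt_of_le (norm_nonneg (sf 0 - tf 0)) with h | h
      · rw [← h, zero_mul] at h2; norm_num at h2
      · exact h
    nlinarith
  have hv0 : ‖L₃ 0‖ ≤ 6 := by
    rw [hL₃0]
    have := abs_clog_le hw0l hw0u
    linarith [Real.pi_lt_d2]
  -- Landau bound on deriv L₃
  have hdense := omitted_dense huint hs2 ht2 hL₃exp
  have hLand : ∀ z ∈ closedBall (0:ℂ) ρ, ‖deriv L₃ z‖ ≤ 512 / (1 - ρ) := by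
    intro z hz
    rw [mem_closedBall, dist_zero_right] at hz
    have hball : ball z (1 - ρ) ⊆ ball (0:ℂ) 1 := by
      intro y hy
      rw [mem_ball] at hy ⊢
      rw [dist_zero_right]
      have := dist_triangle y z 0
      rw [dist_zero_right, dist_zero_right] at this
      have hzd : dist y z < 1 - ρ := hy
      linarith
    have := landau (f := L₃) (z₀ := z) (r := 1 - ρ) (d := 2) (by linarith) (by norm_num)
      (hL₃diff.mono hball)
      (by
        intro w
        obtain ⟨ω, hω1, hω2⟩ := hdense w
        exact ⟨ω, fun hc => hω1 (image_mono hball hc), hω2⟩)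
    calc ‖deriv L₃ z‖ ≤ 256 * 2 / (1 - ρ) := this
      _ = 512 / (1 - ρ) := by ring
  -- mean value
  have hcbsub : closedBall (0:ℂ) ρ ⊆ ball (0:ℂ) 1 := by
    intro y hy
    rw [mem_closedBall, dist_zero_right] at hy
    rw [mem_ball, dist_zero_right]
    linarith
  have hvbound : ∀ z ∈ closedBall (0:ℂ) ρ, ‖L₃ z‖ ≤ 6 + 512 / (1 - ρ) := by
    intro z hz
    have hder : ∀ x ∈ closedBall (0:ℂ) ρ,
        HasDerivWithinAt L₃ (deriv L₃ x) (closedBall (0:ℂ) ρ) x := by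
      intro x hx
      have h := hL₃d x (hcbsub hx)
      rw [h.deriv]
      exact h.hasDerivWithinAt
    have h0cb : (0:ℂ) ∈ closedBall (0:ℂ) ρ := by
      simp [mem_closedBall]; linarith
    have := (convex_closedBall (0:ℂ) ρ).norm_image_sub_le_of_norm_hasDerivWithin_le
      hder hLand h0cb hz
    have hzn : ‖z - 0‖ ≤ ρ := by
      rw [sub_zero]
      rw [mem_closedBall, dist_zero_right] at hz
      exact hz
    have hbig : ‖L₃ z - L₃ 0‖ ≤ 512 / (1 - ρ) := by
      calc ‖L₃ z - L₃ 0‖ ≤ 512 / (1 - ρ) * ‖z - 0‖ := this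
        _ ≤ 512 / (1 - ρ) * 1 := by
            apply mul_le_mul_of_nonneg_left _ (by
              have h1ρ : (0:ℝ) < 1 - ρ := by linarith
              positivity)
            linarith
        _ = 512 / (1 - ρ) := by ring
    have h1 : ‖L₃ z‖ ≤ ‖L₃ 0‖ + ‖L₃ z - L₃ 0‖ := by
      have := norm_add_le (L₃ 0) (L₃ z - L₃ 0)
      simp only [add_sub_cancel] at this
      simpa using this
    linarith
  -- unwind
  intro z hz
  have hz1 : z ∈ ball (0:ℂ) 1 := hcbsub hz
  set V : ℝ := 6 + 512 / (1 - ρ) with hVdef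
  have hVpos : 0 < V := by
    rw [hVdef]
    have h1ρ : (0:ℝ) < 1 - ρ := by linarith
    have : 0 < 512 / (1 - ρ) := by positivity
    linarith
  have hL₃z := hvbound z hz
  have h2s : 2 * sf z = Complex.exp (L₃ z) + Complex.exp (-L₃ z) := by
    have h1 := hL₃exp z hz1
    have h2 := hprod z hz1
    have h3 : Complex.exp (-L₃ z) = sf z + tf z := by
      rw [Complex.exp_neg, h1]
      exact (eq_inv_of_mul_eq_one_left (by linear_combination h2)).symm
    rw [h1, h3]
    ring
  have habs_s : ‖sf z‖ ≤ Real.exp V := by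
    have h1 : ‖2 * sf z‖ ≤ ‖Complex.exp (L₃ z)‖ + ‖Complex.exp (-L₃ z)‖ := by
      rw [h2s]
      exact norm_add_le _ _
    have h2 : ‖Complex.exp (L₃ z)‖ ≤ Real.exp V := by
      rw [Complex.norm_exp]
      apply Real.exp_le_exp.mpr
      calc (L₃ z).re ≤ |(L₃ z).re| := le_abs_self _
        _ ≤ ‖L₃ z‖ := Complex.abs_re_le_norm _
        _ ≤ V := hL₃z
    have h3 : ‖Complex.exp (-L₃ z)‖ ≤ Real.exp V := by
      rw [Complex.norm_exp]
      apply Real.exp_le_exp.mpr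
      calc (-L₃ z).re = -(L₃ z).re := by simp
        _ ≤ |(L₃ z).re| := neg_le_abs _
        _ ≤ ‖L₃ z‖ := Complex.abs_re_le_norm _
        _ ≤ V := hL₃z
    have h4 : ‖2 * sf z‖ = 2 * ‖sf z‖ := by
      rw [norm_mul]
      simp
    linarith
  have habs_u : ‖u z‖ ≤ Real.exp (2 * V) := by
    rw [← hs2 z hz1]
    rw [norm_pow]
    calc ‖sf z‖ ^ 2 ≤ (Real.exp V)^2 := by
          apply pow_le_pow_left₀ (norm_nonneg _) habs_s
      _ = Real.exp (2 * V) := by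
          rw [← Real.exp_nat_mul]
          norm_num
  have hgz : ‖g z‖ = Real.exp ((c2 * u z).re) := by
    rw [← hLexp z hz1, hLu z, Complex.norm_exp]
  rw [hgz]
  apply Real.exp_le_exp.mpr
  have hre : (c2 * u z).re = -(2 * Real.pi * (u z).im) := by
    rw [hc2def]
    simp [Complex.mul_re, Complex.mul_im]
    try ring
  rw [hre]
  have him : |(u z).im| ≤ ‖u z‖ := Complex.abs_im_le_norm _
  have : -(2 * Real.pi * (u z).im) ≤ 2 * Real.pi * ‖u z‖ := by
    nlinarith [Real.pi_pos, neg_le_abs (u z).im, abs_nonneg (u z).im]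
  calc -(2 * Real.pi * (u z).im) ≤ 2 * Real.pi * ‖u z‖ := this
    _ ≤ 2 * Real.pi * Real.exp (2 * V) := by
        apply mul_le_mul_of_nonneg_left habs_u (by positivity)
    _ = 2 * Real.pi * Real.exp (2 * (6 + 512 / (1 - ρ))) := by rw [hVdef]

end BohrAux

/-- Bohr's covering lemma: for every `ρ ∈ (0,1)` there is `c > 0` such that every
holomorphic `h` on the unit disc with `h(0) = 0` and `max_{|z|=ρ} |h(z)| ≥ 1`
covers some full circle `{|w| = R}` with `R ≥ c`. -/
theorem stmt_7 (ρ : ℝ) (hρ : 0 < ρ) (hρ1 : ρ < 1) :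
    ∃ c > 0, ∀ h : ℂ → ℂ, DifferentiableOn ℂ h (Metric.ball 0 1) → h 0 = 0 →
      (∃ z : ℂ, ‖z‖ = ρ ∧ 1 ≤ ‖h z‖) →
      ∃ R ≥ c, Metric.sphere (0 : ℂ) R ⊆ h '' Metric.ball 0 1 := by
  set S : ℝ := Real.exp (2 * Real.pi * Real.exp (2 * (6 + 512 / (1 - ρ)))) with hSdef
  have h1ρ : (0:ℝ) < 1 - ρ := by linarith
  have hSpos : 0 < S := Real.exp_pos _
  have hS1 : 1 ≤ S := Real.one_le_exp (by positivity)
  set c : ℝ := 1 / (12 * S) with hcdef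
  have hcpos : 0 < c := by positivity
  have hc12 : c ≤ 1 / 12 := by
    rw [hcdef]
    rw [div_le_div_iff₀ (by positivity) (by norm_num)]
    nlinarith
  refine ⟨c, hcpos, ?_⟩
  intro h hdiff h0 hmax
  obtain ⟨z₀, hz₀ρ, hz₀1⟩ := hmax
  by_contra hcon
  push_neg at hcon
  -- omitted points on circles of radius c and 2c
  have hnot1 := hcon c (le_refl c)
  have hnot2 := hcon (2*c) (by linarith)
  obtain ⟨ω₁, hω₁s, hω₁n⟩ := Set.not_subset.mp hnot1
  obtain ⟨ω₂, hω₂s, hω₂n⟩ := Set.not_subset.mp hnot2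
  have hω₁a : ‖ω₁‖ = c := by
    rw [mem_sphere_iff_norm, sub_zero] at hω₁s
    exact hω₁s
  have hω₂a : ‖ω₂‖ = 2*c := by
    rw [mem_sphere_iff_norm, sub_zero] at hω₂s
    exact hω₂s
  set d : ℂ := ω₂ - ω₁ with hddef
  have hdl : c ≤ ‖d‖ := by
    rw [hddef]
    calc c = ‖ω₂‖ - ‖ω₁‖ := by rw [hω₁a, hω₂a]; ring
      _ ≤ ‖ω₂ - ω₁‖ := by
          have := norm_sub_norm_le ω₂ ω₁
          simpa using this
  have hdu : ‖d‖ ≤ 3*c := by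
    rw [hddef]
    calc ‖ω₂ - ω₁‖ ≤ ‖ω₂‖ + ‖ω₁‖ := by
          have := norm_sub_le ω₂ ω₁
          simpa using this
      _ = 3*c := by rw [hω₁a, hω₂a]; ring
  have hdne : d ≠ 0 := by
    intro hd0
    rw [hd0] at hdl
    simp at hdl
    linarith
  set G : ℂ → ℂ := fun z => (h z - ω₁) / d with hGdef
  have hGdiff : DifferentiableOn ℂ G (ball 0 1) :=
    (hdiff.sub (differentiableOn_const ω₁)).div_const d
  have hGne0 : ∀ z ∈ ball (0:ℂ) 1, G z ≠ 0 := by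
    intro z hz hG
    apply hω₁n
    rw [hGdef] at hG
    simp only [div_eq_zero_iff, sub_eq_zero] at hG
    rcases hG with hG | hG
    · exact ⟨z, hz, hG⟩
    · exact absurd hG hdne
  have hGne1 : ∀ z ∈ ball (0:ℂ) 1, G z ≠ 1 := by
    intro z hz hG
    apply hω₂n
    rw [hGdef] at hG
    rw [div_eq_one_iff_eq hdne, hddef] at hG
    exact ⟨z, hz, by linear_combination hG⟩
  have hG0a : ‖G 0‖ = c / ‖d‖ := by
    rw [hGdef]
    simp only [h0, zero_sub, norm_div, norm_neg, hω₁a]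
  have hb1 : 1/3 ≤ ‖G 0‖ := by
    rw [hG0a, le_div_iff₀ (by linarith : (0:ℝ) < ‖d‖)]
    nlinarith
  have hb2 : ‖G 0‖ ≤ 1 := by
    rw [hG0a]
    rw [div_le_one (by linarith)]
    linarith
  have hsch := BohrAux.schottky hρ hρ1 hGdiff hGne0 hGne1 hb1 hb2
  have hz₀cb : z₀ ∈ closedBall (0:ℂ) ρ := by
    rw [mem_closedBall, dist_zero_right, hz₀ρ]
  have hbound := hsch z₀ hz₀cb
  rw [← hSdef] at hbound
  -- lower bound on |G z₀|
  have hlow : (1 - c) / (3*c) ≤ ‖G z₀‖ := by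
    rw [hGdef]
    simp only [norm_div]
    have hnum : 1 - c ≤ ‖h z₀ - ω₁‖ := by
      have := norm_sub_norm_le (h z₀) ω₁
      rw [hω₁a] at this
      linarith
    have hden : 0 < ‖d‖ := by linarith
    rw [div_le_div_iff₀ (by positivity) hden]
    have h1c : 0 ≤ 1 - c := by linarith
    nlinarith
  have hfinal : (1 - c) / (3*c) > S := by
    rw [gt_iff_lt, lt_div_iff₀ (by positivity)]
    have hcS : c * S = 1/12 := by
      rw [hcdef]
      field_simp
    nlinarith
  linarith
end

section
/- Let f : ℂ → ℂ be entire and non-constant, and let G ⊂ ℂ be a bounded domain. Then f(T(G)) ⊆ T(f(G)) and ∂T(f(G)) ⊆ f(∂T(G)), where T(G) denotes the topological hull of G (the union of G with the bounded connected components of its complement). -/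
open Set Metric Bornology

lemma entire_isOpenMap {f : ℂ → ℂ} (hf : Differentiable ℂ f)
    (hnc : ¬ ∃ c : ℂ, f = Function.const ℂ c) : IsOpenMap f := by
  have h := (Complex.analyticOnNhd_univ_iff_differentiable.mpr hf).is_constant_or_isOpen
      isPreconnected_univ
  rcases h with ⟨w, hw⟩ | h
  · exact absurd ⟨w, funext fun z => hw z (mem_univ z)⟩ hnc
  · exact fun s hs => h s (subset_univ s) hs

lemma isClosed_ccIn {F : Set ℂ} (hF : IsClosed F) (x : ℂ) :
    IsClosed (connectedComponentIn F x) := by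
  by_cases hx : x ∈ F
  · apply isClosed_of_closure_subset
    exact isPreconnected_connectedComponentIn.closure.subset_connectedComponentIn
      (subset_closure (mem_connectedComponentIn hx))
      (hF.closure_subset_iff.mpr (connectedComponentIn_subset F x))
  · rw [connectedComponentIn_eq_empty hx]; exact isClosed_empty

lemma exists_surround {G : Set ℂ} (hGo : IsOpen G) {z : ℂ} (hz : z ∉ G)
    (hb : Bornology.IsBounded (connectedComponentIn Gᶜ z)) :
    ∃ O : Set ℂ, IsOpen O ∧ Bornology.IsBounded O ∧ z ∈ O ∧ frontier O ⊆ G := by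
  set K := connectedComponentIn Gᶜ z with hK
  have hzK : z ∈ K := mem_connectedComponentIn hz
  obtain ⟨R₀, hR₀⟩ := (isBounded_iff_subset_closedBall (0 : ℂ)).mp hb
  set R : ℝ := max R₀ 0 + 1 with hRdef
  have hRpos : 0 < R := by positivity
  have hKR : K ⊆ ball (0 : ℂ) R := fun w hw => by
    have := hR₀ hw
    simp only [mem_closedBall, mem_ball] at this ⊢
    calc dist w 0 ≤ R₀ := this
      _ ≤ max R₀ 0 := le_max_left _ _
      _ < R := by simp [hRdef]
  set R' : ℝ := R + 2 with hR'def
  set M : Set ℂ := Gᶜ ∩ closedBall 0 R' with hMdef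
  have hMclosed : IsClosed M := hGo.isClosed_compl.inter Metric.isClosed_closedBall
  have hMcpt : IsCompact M := Metric.isCompact_of_isClosed_isBounded hMclosed
    (isBounded_closedBall.subset inter_subset_right)
  have hzM : z ∈ M := ⟨hz, by
    have := hKR hzK
    simp only [mem_ball, mem_closedBall] at this ⊢
    linarith⟩
  haveI : CompactSpace M := isCompact_iff_compactSpace.mp hMcpt
  set z' : M := ⟨z, hzM⟩ with hz'
  -- the connected component of z' in M maps into K
  have hccK : Subtype.val '' connectedComponent z' ⊆ K := by
    apply (isPreconnected_connectedComponent.image _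
      continuous_subtype_val.continuousOn).subset_connectedComponentIn
    · exact ⟨z', mem_connectedComponent, rfl⟩
    · rintro w ⟨m, _, rfl⟩
      exact m.2.1
  have hccU : connectedComponent z' ⊆ Subtype.val ⁻¹' (ball (0:ℂ) R) := by
    intro m hm
    exact hKR (hccK ⟨m, hm, rfl⟩)
  -- find a clopen set inside
  have hne : Nonempty {s : Set M // IsClopen s ∧ z' ∈ s} :=
    ⟨⟨univ, isClopen_univ, mem_univ _⟩⟩
  obtain ⟨⟨E, hEclopen, hz'E⟩, hEsub⟩ :=
    exists_subset_nhds_of_isCompact' (V := fun s : {s : Set M // IsClopen s ∧ z' ∈ s} => s.1)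
      (fun i j => ⟨⟨i.1 ∩ j.1, i.2.1.inter j.2.1, i.2.2, j.2.2⟩,
        inter_subset_left, inter_subset_right⟩)
      (fun i => i.2.1.isClosed.isCompact)
      (fun i => i.2.1.isClosed)
      (U := Subtype.val ⁻¹' (ball (0:ℂ) R))
      (fun x hx => by
        rw [← connectedComponent_eq_iInter_isClopen z'] at hx
        exact ((isOpen_ball.preimage continuous_subtype_val).mem_nhds (hccU hx)))
  set Eimg : Set ℂ := Subtype.val '' E with hEimg
  have hEimgcpt : IsCompact Eimg := (hEclopen.isClosed.isCompact).image continuous_subtype_val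
  have hEball : Eimg ⊆ ball (0:ℂ) R := by
    rintro w ⟨m, hm, rfl⟩; exact hEsub hm
  have hzE : z ∈ Eimg := ⟨z', hz'E, rfl⟩
  have hEne : Eimg.Nonempty := ⟨z, hzE⟩
  -- the rest of M
  have hMc : M \ Eimg = Subtype.val '' (Eᶜ : Set M) := by
    ext w
    constructor
    · rintro ⟨hwM, hwE⟩
      exact ⟨⟨w, hwM⟩, fun h => hwE ⟨⟨w, hwM⟩, h, rfl⟩, rfl⟩
    · rintro ⟨m, hm, rfl⟩
      refine ⟨m.2, fun ⟨m', hm', hmm⟩ => hm ?_⟩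
      have : m' = m := Subtype.ext hmm
      rwa [this] at hm'
  have hMccpt : IsCompact (M \ Eimg) := by
    rw [hMc]
    exact (hEclopen.compl.isClosed.isCompact).image continuous_subtype_val
  -- separation
  obtain ⟨δ₀, hδ₀pos, hδ₀⟩ := hEimgcpt.exists_thickening_subset_open
    (hMccpt.isClosed.isOpen_compl) (fun w hw hw' => hw'.2 hw)
  set δ : ℝ := min (δ₀ / 2) 1 with hδdef
  have hδpos : 0 < δ := by positivity
  have hδlt : δ < δ₀ := lt_of_le_of_lt (min_le_left _ _) (by linarith)
  have hδle1 : δ ≤ 1 := min_le_right _ _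
  refine ⟨thickening δ Eimg, isOpen_thickening, hEimgcpt.isBounded.thickening,
    self_subset_thickening hδpos Eimg hzE, ?_⟩
  intro w hw
  have hwd : infDist w Eimg = δ := by
    have h := frontier_thickening_subset Eimg hw
    simp only [mem_setOf_eq] at h
    rw [infDist, h, ENNReal.toReal_ofReal hδpos.le]
  by_contra hwG
  -- w ∈ M
  obtain ⟨e, heE, hde⟩ := hEimgcpt.exists_infDist_eq_dist hEne w
  have hwM : w ∈ M := by
    refine ⟨hwG, ?_⟩
    have h1 : dist w e = δ := by rw [← hde, hwd]
    have h2 : dist e 0 < R := hEball heE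
    simp only [mem_closedBall]
    calc dist w 0 ≤ dist w e + dist e 0 := dist_triangle _ _ _
      _ ≤ δ + R := by linarith
      _ ≤ R' := by simp only [hR'def]; linarith
  have hwthick : w ∈ thickening δ₀ Eimg := by
    rw [mem_thickening_iff_infDist_lt hEne, hwd]; exact hδlt
  have := hδ₀ hwthick
  have hwE : w ∈ Eimg := by
    by_contra hwE
    exact this ⟨hwM, hwE⟩
  have : infDist w Eimg = 0 := by
    rw [infDist_zero_of_mem hwE]
  rw [this] at hwd
  exact hδpos.ne hwd

lemma bounded_image_component {f : ℂ → ℂ} (hfc : Continuous f) (hfo : IsOpenMap f)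
    {G O : Set ℂ} {z : ℂ} (hOo : IsOpen O) (hOb : Bornology.IsBounded O) (hzO : z ∈ O)
    (hfr : frontier O ⊆ G) (hq : f z ∉ f '' G) :
    Bornology.IsBounded (connectedComponentIn (f '' G)ᶜ (f z)) := by
  set B : Set ℂ := f '' frontier O with hB
  have hBG : B ⊆ f '' G := image_mono (f := f) hfr
  have hqB : f z ∈ Bᶜ := fun h => hq (hBG h)
  set C := connectedComponentIn Bᶜ (f z) with hC
  have hsub : connectedComponentIn (f '' G)ᶜ (f z) ⊆ C :=
    connectedComponentIn_mono _ (compl_subset_compl.mpr hBG)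
  set A : Set ℂ := f '' O with hA
  have hAopen : IsOpen A := hfo O hOo
  have hclcpt : IsCompact (closure O) :=
    Metric.isCompact_of_isClosed_isBounded isClosed_closure hOb.closure
  have himgcpt : IsCompact (f '' closure O) := hclcpt.image hfc
  have hclA : closure A ⊆ f '' closure O :=
    closure_minimal (image_mono (f := f) subset_closure) himgcpt.isClosed
  -- C ⊆ A ∪ (closure A)ᶜ
  have hCsub : C ⊆ A ∪ (closure A)ᶜ := by
    intro c hc
    by_cases hcc : c ∈ closure A
    · left
      obtain ⟨x, hx, rfl⟩ := hclA hcc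
      rw [closure_eq_self_union_frontier] at hx
      rcases hx with hx | hx
      · exact ⟨x, hx, rfl⟩
      · exact absurd ⟨x, hx, rfl⟩ (connectedComponentIn_subset Bᶜ (f z) hc)
    · exact Or.inr hcc
  have hCA : C ⊆ A := by
    have := isPreconnected_connectedComponentIn.subset_left_of_subset_union
      hAopen (isClosed_closure.isOpen_compl)
      (disjoint_compl_right.mono_left subset_closure) hCsub
      ⟨f z, mem_connectedComponentIn hqB, ⟨z, hzO, rfl⟩⟩
    exact this
  exact (himgcpt.isBounded.subset (image_mono (f := f) subset_closure)).subset
    (hsub.trans hCA)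


/-- The topological hull `T(G)` of a set `G ⊆ ℂ`: the complement of the union of the
unbounded connected components of `ℂ \ G`; i.e. `G` together with the bounded
connected components of its complement. -/
def topHull (G : Set ℂ) : Set ℂ :=
  (⋃ w ∈ {w : ℂ | w ∉ G ∧ ¬ Bornology.IsBounded (connectedComponentIn Gᶜ w)},
    connectedComponentIn Gᶜ w)ᶜ

lemma subset_topHull (G : Set ℂ) : G ⊆ topHull G := by
  intro z hz hmem
  obtain ⟨w, _, hzcc⟩ := mem_iUnion₂.mp hmem
  exact (connectedComponentIn_subset Gᶜ w) hzcc hz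

lemma topHull_part1 {f : ℂ → ℂ} (hfc : Continuous f) (hfo : IsOpenMap f)
    {G : Set ℂ} (hGo : IsOpen G) : f '' topHull G ⊆ topHull (f '' G) := by
  rintro q ⟨z, hz, rfl⟩
  intro hmem
  obtain ⟨w, hw, hfzw⟩ := mem_iUnion₂.mp hmem
  obtain ⟨hwH, hwu⟩ := hw
  have hfz : f z ∉ f '' G := fun hin => (connectedComponentIn_subset _ _ hfzw) hin
  have hzG : z ∉ G := fun h => hfz ⟨z, h, rfl⟩
  have hbz : Bornology.IsBounded (connectedComponentIn Gᶜ z) := by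
    by_contra hb
    exact hz (mem_iUnion₂.mpr ⟨z, ⟨hzG, hb⟩, mem_connectedComponentIn hzG⟩)
  obtain ⟨O, hOo, hOb, hzO, hfr⟩ := exists_surround hGo hzG hbz
  have hbdd := bounded_image_component hfc hfo hOo hOb hzO hfr hfz
  rw [connectedComponentIn_eq hfzw] at hwu
  exact hwu hbdd

/-- If `f` is a non-constant entire function and `G` a bounded domain, then
`f(T(G)) ⊆ T(f(G))` and `∂T(f(G)) ⊆ f(∂T(G))`. -/
theorem stmt_8 (f : ℂ → ℂ) (hf : Differentiable ℂ f)
    (hnc : ¬ ∃ c : ℂ, f = Function.const ℂ c)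
    (G : Set ℂ) (hGo : IsOpen G) (hGc : IsConnected G) (hGb : Bornology.IsBounded G) :
    f '' topHull G ⊆ topHull (f '' G) ∧
    frontier (topHull (f '' G)) ⊆ f '' frontier (topHull G) := by
  have hfc : Continuous f := hf.continuous
  have hfo : IsOpenMap f := entire_isOpenMap hf hnc
  have hpart1 := topHull_part1 hfc hfo hGo
  refine ⟨hpart1, ?_⟩
  set H : Set ℂ := f '' G with hH
  have hHo : IsOpen H := hfo G hGo
  have hclcpt : IsCompact (closure G) :=
    Metric.isCompact_of_isClosed_isBounded isClosed_closure hGb.closure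
  have himgcpt : IsCompact (f '' closure G) := hclcpt.image hfc
  have hclH : closure H ⊆ f '' closure G :=
    closure_minimal (image_mono (f := f) subset_closure) himgcpt.isClosed
  obtain ⟨R, hR⟩ := (isBounded_iff_subset_closedBall (0 : ℂ)).mp himgcpt.isBounded
  set R₁ : ℝ := max R 1 with hR₁def
  have hR₁pos : 0 < R₁ := lt_of_lt_of_le one_pos (le_max_right _ _)
  set Eext : Set ℂ := {v : ℂ | R₁ < ‖v‖} with hEextdef
  have hEext_pre : IsPreconnected Eext := by
    have heq : Eext = Complex.exp '' {c : ℂ | Real.log R₁ < c.re} := by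
      apply subset_antisymm
      · intro v hv
        have hvne : v ≠ 0 := by
          intro h
          rw [h] at hv
          simp only [hEextdef, mem_setOf_eq, map_zero, norm_zero] at hv
          linarith
        refine ⟨Complex.log v, ?_, Complex.exp_log hvne⟩
        simp only [mem_setOf_eq, Complex.log_re]
        exact Real.log_lt_log hR₁pos hv
      · rintro v ⟨c, hc, rfl⟩
        simp only [hEextdef, mem_setOf_eq, Complex.norm_exp]
        calc R₁ = Real.exp (Real.log R₁) := (Real.exp_log hR₁pos).symm
          _ < Real.exp c.re := Real.exp_lt_exp.mpr hc
    rw [heq]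
    exact ((convex_halfSpace_re_gt _).isPreconnected).image _
      Complex.continuous_exp.continuousOn
  have hEextH : Eext ⊆ Hᶜ := by
    intro v hv hvH
    have : v ∈ closedBall (0 : ℂ) R := hR ((image_mono (f := f) subset_closure) hvH)
    simp only [mem_closedBall, Complex.dist_eq, sub_zero] at this
    have : ‖v‖ ≤ R₁ := le_trans this (le_max_left _ _)
    exact absurd hv (not_lt.mpr this)
  intro p hp
  rw [topHull, frontier_compl] at hp
  by_cases hidx : ∃ w : ℂ, w ∈ {w : ℂ | w ∉ H ∧
      ¬ Bornology.IsBounded (connectedComponentIn Hᶜ w)}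
  · obtain ⟨w₀, hw₀⟩ := hidx
    set v₁ : ℂ := ((R₁ + 1 : ℝ) : ℂ) with hv₁def
    have hv₁ : v₁ ∈ Eext := by
      simp only [hEextdef, mem_setOf_eq, hv₁def, Complex.norm_real, Real.norm_eq_abs]
      rw [abs_of_pos (by linarith)]
      linarith
    have key : ∀ w ∈ {w : ℂ | w ∉ H ∧
        ¬ Bornology.IsBounded (connectedComponentIn Hᶜ w)},
        connectedComponentIn Hᶜ w = connectedComponentIn Hᶜ v₁ := by
      rintro w ⟨hwH, hwu⟩
      have hnotsub : ¬ (connectedComponentIn Hᶜ w ⊆ closedBall (0 : ℂ) R₁) :=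
        fun h => hwu (isBounded_closedBall.subset h)
      obtain ⟨v, hvcc, hvout⟩ := not_subset.mp hnotsub
      have hvE : v ∈ Eext := by
        simp only [mem_closedBall, Complex.dist_eq, sub_zero, not_le] at hvout
        exact hvout
      have h2 : Eext ⊆ connectedComponentIn Hᶜ v :=
        hEext_pre.subset_connectedComponentIn hvE hEextH
      exact (connectedComponentIn_eq hvcc).trans (connectedComponentIn_eq (h2 hv₁))
    have hUu : (⋃ w ∈ {w : ℂ | w ∉ H ∧
        ¬ Bornology.IsBounded (connectedComponentIn Hᶜ w)},
        connectedComponentIn Hᶜ w) = connectedComponentIn Hᶜ v₁ := by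
      apply subset_antisymm
      · exact iUnion₂_subset fun w hw => (key w hw).le
      · rw [← key w₀ hw₀]
        exact subset_iUnion₂ (s := fun w _ => connectedComponentIn Hᶜ w) w₀ hw₀
    rw [hUu] at hp
    set V₂ := connectedComponentIn Hᶜ v₁ with hV₂
    have hV₂closed : IsClosed V₂ := isClosed_ccIn hHo.isClosed_compl v₁
    have hpV₂ : p ∈ V₂ := hV₂closed.closure_eq ▸ (frontier_subset_closure hp)
    have hpint : p ∉ interior V₂ := fun h => hp.2 h
    have hpH : p ∉ H := fun h => (connectedComponentIn_subset Hᶜ v₁ hpV₂) h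
    have hpclH : p ∈ closure H := by
      by_contra hcl
      have hmem : (closure H)ᶜ ∈ nhds p := (isClosed_closure.isOpen_compl).mem_nhds hcl
      obtain ⟨r, hrpos, hrsub⟩ := Metric.mem_nhds_iff.mp hmem
      have hball : ball p r ⊆ Hᶜ := fun y hy hyH => (hrsub hy) (subset_closure hyH)
      have hsub : ball p r ⊆ connectedComponentIn Hᶜ p :=
        (convex_ball p r).isPreconnected.subset_connectedComponentIn
          (mem_ball_self hrpos) hball
      rw [← connectedComponentIn_eq hpV₂] at hsub
      exact hpint (mem_interior.mpr ⟨ball p r, hsub, isOpen_ball, mem_ball_self hrpos⟩)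
    obtain ⟨x, hxcl, hfx⟩ := hclH hpclH
    have hxG : x ∉ G := fun h => hpH (hfx ▸ ⟨x, h, rfl⟩)
    have hxT : x ∉ topHull G := by
      intro hxT
      have hpT : p ∈ topHull H := hpart1 ⟨x, hxT, hfx⟩
      rw [topHull, hUu] at hpT
      exact hpT hpV₂
    refine ⟨x, ?_, hfx⟩
    show x ∈ closure (topHull G) \ interior (topHull G)
    exact ⟨(closure_mono (subset_topHull G)) hxcl,
      fun h => hxT (interior_subset h)⟩
  · push_neg at hidx
    have hUu : (⋃ w ∈ {w : ℂ | w ∉ H ∧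
        ¬ Bornology.IsBounded (connectedComponentIn Hᶜ w)},
        connectedComponentIn Hᶜ w) = (∅ : Set ℂ) := by
      apply eq_empty_iff_forall_notMem.mpr
      intro y hy
      obtain ⟨w, hw, _⟩ := mem_iUnion₂.mp hy
      exact hidx w hw
    rw [hUu, frontier_empty] at hp
    exact absurd hp (notMem_empty p)
end

section
/- Let f : ℂ → ℂ be an open continuous map (e.g., a non-constant entire function) and let A ⊆ ℂ be a closed, connected, unbounded set. Then every connected component of f⁻¹(A) is unbounded. -/
open Set Metric Bornology

/-- Šura–Bura type step: a compact connected component of a closed set `F ⊆ ℂ`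
is contained in a compact set that is open in `F`. -/
theorem aux_clopen (F : Set ℂ) (hF : IsClosed F) (z : ℂ) (hz : z ∈ F)
    (hb : IsBounded (connectedComponentIn F z)) :
    ∃ K V : Set ℂ, IsCompact K ∧ IsOpen V ∧ K = V ∩ F ∧ z ∈ K := by
  set C := connectedComponentIn F z with hC
  obtain ⟨R, hCR⟩ : ∃ R, C ⊆ ball (0 : ℂ) R := by
    obtain ⟨R, hR⟩ := hb.subset_ball (0 : ℂ)
    exact ⟨R, hR⟩
  set B := closedBall (0 : ℂ) R with hB
  have hzB : z ∈ F ∩ B := ⟨hz, ball_subset_closedBall (hCR (mem_connectedComponentIn hz))⟩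
  have hFB : IsCompact (F ∩ B) :=
    isCompact_of_isClosed_isBounded (hF.inter isClosed_closedBall) (isBounded_closedBall.subset
      inter_subset_right)
  -- The component in `F ∩ B` equals `C`.
  have hCC : connectedComponentIn (F ∩ B) z = C := by
    apply Subset.antisymm (connectedComponentIn_mono z inter_subset_left)
    exact (isPreconnected_connectedComponentIn).subset_connectedComponentIn
      (mem_connectedComponentIn hz)
      (subset_inter (connectedComponentIn_subset F z) (hCR.trans ball_subset_closedBall))
  -- Work in the compact subtype `X`.
  haveI : CompactSpace (F ∩ B : Set ℂ) := isCompact_iff_compactSpace.1 hFB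
  set x : (F ∩ B : Set ℂ) := ⟨z, hzB⟩ with hx
  set S' : Set (F ∩ B : Set ℂ) := (↑) ⁻¹' (sphere (0 : ℂ) R) with hS'
  have hS'c : IsCompact S' :=
    (isClosed_sphere.preimage continuous_subtype_val).isCompact
  have hdisj : (S' ∩ ⋂ s : { s : Set (F ∩ B : Set ℂ) // IsClopen s ∧ x ∈ s }, (s : Set _)) = ∅ := by
    rw [← connectedComponent_eq_iInter_isClopen x]
    ext y
    simp only [mem_inter_iff, mem_empty_iff_false, iff_false, not_and]
    intro hyS hyc
    have : (y : ℂ) ∈ C := by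
      rw [← hCC, connectedComponentIn_eq_image hzB]
      exact ⟨y, hyc, rfl⟩
    have := hCR this
    rw [mem_ball, mem_preimage, mem_sphere] at *
    rw [hyS] at this
    exact lt_irrefl _ this
  -- Find a clopen set containing `x` and disjoint from the sphere.
  obtain ⟨si, hsi⟩ : ∃ si : Finset { s : Set (F ∩ B : Set ℂ) // IsClopen s ∧ x ∈ s },
      ¬ (S' ∩ ⋂ s ∈ si, (s : Set _)).Nonempty := by
    by_contra h
    push_neg at h
    have := hS'c.inter_iInter_nonempty (fun s : { s : Set (F ∩ B : Set ℂ) // IsClopen s ∧ x ∈ s } => s)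
      (fun s => s.2.1.1) h
    rw [hdisj] at this
    exact this.ne_empty rfl
  set V0 : Set (F ∩ B : Set ℂ) := ⋂ s ∈ si, (s : Set _) with hV0
  have hV0clopen : IsClopen V0 := isClopen_biInter_finset fun s _ => s.2.1
  have hxV0 : x ∈ V0 := mem_iInter₂.2 fun s _ => s.2.2
  have hV0S' : V0 ∩ S' = ∅ := by
    rw [eq_empty_iff_forall_notMem]
    rintro y ⟨h1, h2⟩
    exact hsi ⟨y, h2, h1⟩
  -- Push down to `ℂ`.
  set K : Set ℂ := (↑) '' V0 with hK
  have hKcompact : IsCompact K :=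
    (hV0clopen.1.isCompact).image continuous_subtype_val
  have hKF : K ⊆ F ∩ B := by rintro _ ⟨y, -, rfl⟩; exact y.2
  have hKball : K ⊆ ball (0 : ℂ) R := by
    rintro _ ⟨y, hy, rfl⟩
    have h1 : (y : ℂ) ∈ B := y.2.2
    rw [mem_closedBall] at h1
    rcases lt_or_eq_of_le h1 with h | h
    · exact mem_ball.2 h
    · exfalso
      have : y ∈ V0 ∩ S' := ⟨hy, by rwa [hS', mem_preimage, mem_sphere]⟩
      rw [hV0S'] at this; exact this
  obtain ⟨W, hW, hWV0⟩ : ∃ W : Set ℂ, IsOpen W ∧ (↑) ⁻¹' W = V0 :=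
    isOpen_induced_iff.1 hV0clopen.2
  refine ⟨K, W ∩ ball (0 : ℂ) R, hKcompact, hW.inter isOpen_ball, ?_, ⟨x, hxV0, rfl⟩⟩
  apply Subset.antisymm
  · intro y hy
    obtain ⟨y', hy', rfl⟩ := hy
    refine ⟨⟨?_, hKball ⟨y', hy', rfl⟩⟩, y'.2.1⟩
    rw [← hWV0] at hy'; exact hy'
  · rintro y ⟨⟨hyW, hyball⟩, hyF⟩
    exact ⟨⟨y, hyF, ball_subset_closedBall hyball⟩, by rw [← hWV0] at *; exact hyW, rfl⟩

/-- If `f : ℂ → ℂ` is a continuous open map and `A ⊆ ℂ` is closed, connected and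
unbounded, then every connected component of `f⁻¹(A)` is unbounded. -/
theorem stmt_13 (f : ℂ → ℂ) (hc : Continuous f) (ho : IsOpenMap f)
    (A : Set ℂ) (hA : IsClosed A) (hconn : IsConnected A)
    (hunb : ¬ Bornology.IsBounded A) :
    ∀ z ∈ f ⁻¹' A, ¬ Bornology.IsBounded (connectedComponentIn (f ⁻¹' A) z) := by
  intro z hz hb
  set F := f ⁻¹' A with hFdef
  have hF : IsClosed F := hA.preimage hc
  obtain ⟨K, V, hKc, hV, hKV, hzK⟩ := aux_clopen F hF z hz hb
  -- Fatten `K` to a bounded open set `U` whose frontier misses `F`.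
  obtain ⟨L, hLc, hKL, hLV⟩ := exists_compact_between hKc hV (hKV ▸ inter_subset_left)
  set U := interior L with hU
  have hUopen : IsOpen U := isOpen_interior
  have hclU : closure U ⊆ L := by
    rw [← hLc.isClosed.closure_eq]; exact closure_mono interior_subset
  have hfrontier : frontier U ∩ F = ∅ := by
    rw [eq_empty_iff_forall_notMem]
    rintro y ⟨hyfr, hyF⟩
    have hyK : y ∈ K := by
      rw [hKV]
      exact ⟨hLV (hclU hyfr.1), hyF⟩
    have : y ∈ U := hKL hyK
    rw [frontier, hUopen.interior_eq] at hyfr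
    exact hyfr.2 this
  have hzU : z ∈ U := hKL hzK
  -- `f '' closure U` is compact, hence bounded.
  have hclUc : IsCompact (closure U) := hLc.of_isClosed_subset isClosed_closure hclU
  have hfclU : IsCompact (f '' closure U) := hclUc.image hc
  -- Use connectedness of `A` with the open cover `f '' U`, `(f '' closure U)ᶜ`.
  obtain ⟨a, haA, hafc⟩ : ∃ a ∈ A, a ∉ f '' closure U := by
    by_contra h
    push_neg at h
    exact hunb (hfclU.isBounded.subset h)
  have hAcover : A ⊆ f '' U ∪ (f '' closure U)ᶜ := by
    intro a ha
    by_cases hcl : a ∈ f '' closure U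
    · left
      obtain ⟨y, hy, rfl⟩ := hcl
      have hyU : y ∈ U := by
        by_contra hyU
        have hyfr : y ∈ frontier U := by
          rw [frontier, hUopen.interior_eq]; exact ⟨hy, hyU⟩
        have : y ∈ frontier U ∩ F := ⟨hyfr, ha⟩
        rw [hfrontier] at this; exact this
      exact ⟨y, hyU, rfl⟩
    · right; exact hcl
  have hne1 : (A ∩ f '' U).Nonempty := ⟨f z, hz, ⟨z, hzU, rfl⟩⟩
  have hne2 : (A ∩ (f '' closure U)ᶜ).Nonempty := ⟨a, haA, hafc⟩
  have := hconn.isPreconnected (f '' U) ((f '' closure U)ᶜ) (ho U hUopen)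
    hfclU.isClosed.isOpen_compl hAcover hne1 hne2
  obtain ⟨b, -, hb1, hb2⟩ := this
  exact hb2 (image_mono (f := f) subset_closure hb1)
end

section
/- (McMullen density lemma, measure version) Let (𝓔_k)_{k≥1} be collections of pairwise disjoint compact subsets of ℝⁿ such that every element of 𝓔_{k+1} is contained in a unique element of 𝓔_k and every element of 𝓔_k contains at least one element of 𝓔_{k+1}. Let E_k be the union of the elements of 𝓔_k and E = ⋂_k E_k. If there are Δ_k ∈ (0,1] with dens(E_{k+1}, A) ≥ Δ_k for every A ∈ 𝓔_k, and ∏_{k=1}^∞ Δ_k > 0, then E has positive Lebesgue measure. -/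
open MeasureTheory

/-- McMullen's density lemma (measure version): if `𝓔 k` are collections of pairwise
disjoint compact subsets of `ℝⁿ`, each element of `𝓔 (k+1)` lies in a unique element
of `𝓔 k`, each element of `𝓔 k` contains an element of `𝓔 (k+1)`, the density of
`E_{k+1} = ⋃₀ 𝓔 (k+1)` in each `A ∈ 𝓔 k` is at least `Δ k`, and `∏ Δ k > 0`, then
`E = ⋂ₖ ⋃₀ 𝓔 k` has positive Lebesgue measure. -/
theorem stmt_15 (n : ℕ) (𝓔 : ℕ → Set (Set (Fin n → ℝ))) (Δ : ℕ → ℝ)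
    (hΔ : ∀ k, 0 < Δ k ∧ Δ k ≤ 1)
    (hne : (𝓔 0).Nonempty)
    (hcpt : ∀ k, ∀ A ∈ 𝓔 k, IsCompact A)
    (hdisj : ∀ k, ∀ A ∈ 𝓔 k, ∀ B ∈ 𝓔 k, A ≠ B → Disjoint A B)
    (hnest : ∀ k, ∀ B ∈ 𝓔 (k + 1), ∃! A, A ∈ 𝓔 k ∧ B ⊆ A)
    (hdown : ∀ k, ∀ A ∈ 𝓔 k, ∃ B ∈ 𝓔 (k + 1), B ⊆ A)
    (hpos : ∀ k, ∀ A ∈ 𝓔 k, 0 < volume A)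
    (hdens : ∀ k, ∀ A ∈ 𝓔 k,
      ENNReal.ofReal (Δ k) * volume A ≤ volume (⋃₀ 𝓔 (k + 1) ∩ A))
    (hprod : ∃ p > (0 : ℝ), ∀ N : ℕ, p ≤ ∏ k ∈ Finset.range N, Δ k) :
    0 < volume (⋂ k, ⋃₀ 𝓔 k) := by
  obtain ⟨A₀, hA₀⟩ := hne
  obtain ⟨p, hp, hpprod⟩ := hprod
  -- each collection is countable
  have hcount : ∀ k, (𝓔 k).Countable := by
    intro k
    have key := MeasureTheory.Measure.countable_meas_pos_of_disjoint_iUnion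
      (μ := (volume : Measure (Fin n → ℝ)))
      (As := fun A : 𝓔 k => (A : Set (Fin n → ℝ)))
      (fun A => (hcpt k A A.2).measurableSet)
      (fun A B hAB => hdisj k A A.2 B B.2 (fun h => hAB (Subtype.ext h)))
    have huniv : (Set.univ : Set (𝓔 k)).Countable :=
      key.mono (fun A _ => hpos k A A.2)
    have : Countable (𝓔 k) := Set.countable_univ_iff.mp huniv
    exact Set.countable_coe_iff.mp this
  have hmeasE : ∀ k, MeasurableSet (⋃₀ 𝓔 k) := fun k =>
    MeasurableSet.sUnion (hcount k) (fun A hA => (hcpt k A hA).measurableSet)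
  -- E is antitone
  have hanti : ∀ k, ⋃₀ 𝓔 (k + 1) ⊆ ⋃₀ 𝓔 k := by
    intro k x hx
    obtain ⟨B, hB, hxB⟩ := hx
    obtain ⟨A, ⟨hA, hBA⟩, -⟩ := hnest k B hB
    exact ⟨A, hA, hBA hxB⟩
  -- sets meeting A₀ are inside A₀
  have hsub : ∀ k, ∀ B ∈ 𝓔 k, (B ∩ A₀).Nonempty → B ⊆ A₀ := by
    intro k
    induction k with
    | zero =>
      intro B hB hBA
      rcases eq_or_ne B A₀ with rfl | h
      · exact subset_rfl
      · exact absurd (Set.disjoint_iff_inter_eq_empty.mp (hdisj 0 B hB A₀ hA₀ h))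
          (Set.nonempty_iff_ne_empty.mp hBA)
    | succ k ih =>
      intro B hB hBA
      obtain ⟨A, ⟨hA, hBA'⟩, -⟩ := hnest k B hB
      exact hBA'.trans (ih A hA (hBA.mono (Set.inter_subset_inter_left _ hBA')))
  set F : ℕ → Set (Set (Fin n → ℝ)) := fun k => {B | B ∈ 𝓔 k ∧ B ⊆ A₀} with hF
  have hFsub : ∀ k, F k ⊆ 𝓔 k := fun k B hB => hB.1
  have hEA : ∀ k, ⋃₀ 𝓔 k ∩ A₀ = ⋃₀ F k := by
    intro k
    ext x
    constructor
    · rintro ⟨⟨B, hB, hxB⟩, hxA⟩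
      exact ⟨B, ⟨hB, hsub k B hB ⟨x, hxB, hxA⟩⟩, hxB⟩
    · rintro ⟨B, ⟨hB, hBA⟩, hxB⟩
      exact ⟨⟨B, hB, hxB⟩, hBA hxB⟩
  have hFcount : ∀ k, (F k).Countable := fun k => (hcount k).mono (hFsub k)
  have hUk : ∀ k, ⋃₀ F k = ⋃ (B : F k), (B : Set (Fin n → ℝ)) := fun k =>
    Set.sUnion_eq_iUnion
  -- key step
  have hstep : ∀ k, ENNReal.ofReal (Δ k) * volume (⋃₀ F k) ≤ volume (⋃₀ F (k + 1)) := by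
    intro k
    have hcnt : Countable (F k) := Set.countable_coe_iff.mpr (hFcount k)
    have hdisjF : Pairwise (Function.onFun Disjoint fun B : F k => (B : Set (Fin n → ℝ))) :=
      fun A B hAB => hdisj k A (A.2.1) B (B.2.1) (fun h => hAB (Subtype.ext h))
    have hmF : ∀ B : F k, MeasurableSet (B : Set (Fin n → ℝ)) :=
      fun B => (hcpt k B B.2.1).measurableSet
    -- ⋃₀ F (k+1) = ⋃ (B : F k), (E_{k+1} ∩ B)
    have heq : ⋃₀ F (k + 1) = ⋃ (B : F k), (⋃₀ 𝓔 (k + 1) ∩ (B : Set (Fin n → ℝ))) := by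
      rw [← hEA (k + 1)]
      have : ⋃ (B : F k), (⋃₀ 𝓔 (k + 1) ∩ (B : Set (Fin n → ℝ)))
          = ⋃₀ 𝓔 (k + 1) ∩ ⋃ (B : F k), (B : Set (Fin n → ℝ)) := by
        rw [Set.inter_iUnion]
      rw [this, ← hUk k, ← hEA k, ← Set.inter_assoc, Set.inter_eq_left.mpr (hanti k)]
    calc ENNReal.ofReal (Δ k) * volume (⋃₀ F k)
        = ENNReal.ofReal (Δ k) * ∑' B : F k, volume (B : Set (Fin n → ℝ)) := by
          rw [hUk k, measure_iUnion hdisjF hmF]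
      _ = ∑' B : F k, ENNReal.ofReal (Δ k) * volume (B : Set (Fin n → ℝ)) := by
          rw [ENNReal.tsum_mul_left]
      _ ≤ ∑' B : F k, volume (⋃₀ 𝓔 (k + 1) ∩ (B : Set (Fin n → ℝ))) :=
          ENNReal.tsum_le_tsum (fun B => hdens k B B.2.1)
      _ = volume (⋃ (B : F k), (⋃₀ 𝓔 (k + 1) ∩ (B : Set (Fin n → ℝ)))) := by
          rw [measure_iUnion (fun A B hAB => ((hdisjF hAB).mono
            Set.inter_subset_right Set.inter_subset_right))
            (fun B => (hmeasE (k + 1)).inter (hmF B))]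
      _ = volume (⋃₀ F (k + 1)) := by rw [heq]
  -- lower bound by induction
  have hlow : ∀ k, ENNReal.ofReal (∏ j ∈ Finset.range k, Δ j) * volume A₀
      ≤ volume (⋃₀ F k) := by
    intro k
    induction k with
    | zero =>
      simp only [Finset.range_zero, Finset.prod_empty, ENNReal.ofReal_one, one_mul]
      have : A₀ ∈ F 0 := ⟨hA₀, subset_rfl⟩
      exact measure_mono (Set.subset_sUnion_of_mem this)
    | succ k ih =>
      have h1 : ENNReal.ofReal (∏ j ∈ Finset.range (k + 1), Δ j)
          = ENNReal.ofReal (Δ k) * ENNReal.ofReal (∏ j ∈ Finset.range k, Δ j) := by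
        rw [Finset.prod_range_succ, ENNReal.ofReal_mul' (hΔ k).1.le, mul_comm]
      calc ENNReal.ofReal (∏ j ∈ Finset.range (k + 1), Δ j) * volume A₀
          = ENNReal.ofReal (Δ k) * (ENNReal.ofReal (∏ j ∈ Finset.range k, Δ j)
            * volume A₀) := by rw [h1, mul_assoc]
        _ ≤ ENNReal.ofReal (Δ k) * volume (⋃₀ F k) :=
            mul_le_mul_right ih _
        _ ≤ volume (⋃₀ F (k + 1)) := hstep k
  have hlowp : ∀ k, ENNReal.ofReal p * volume A₀ ≤ volume (⋃₀ F k) := by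
    intro k
    refine le_trans ?_ (hlow k)
    exact mul_le_mul_left (ENNReal.ofReal_le_ofReal (hpprod k)) _
  -- continuity from above
  have hSm : ∀ k, MeasurableSet (⋃₀ 𝓔 k ∩ A₀) := fun k =>
    (hmeasE k).inter (hcpt 0 A₀ hA₀).measurableSet
  have hSanti : Antitone (fun k => ⋃₀ 𝓔 k ∩ A₀) :=
    antitone_nat_of_succ_le (fun k =>
      Set.inter_subset_inter_left _ (hanti k))
  have hfin : volume (⋃₀ 𝓔 0 ∩ A₀) ≠ ⊤ :=
    ne_of_lt (lt_of_le_of_lt (measure_mono Set.inter_subset_right)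
      (hcpt 0 A₀ hA₀).measure_lt_top)
  have hiInf : volume (⋂ k, (⋃₀ 𝓔 k ∩ A₀)) = ⨅ k, volume (⋃₀ 𝓔 k ∩ A₀) :=
    Directed.measure_iInter (fun k => (hSm k).nullMeasurableSet)
      (hSanti.directed_ge) ⟨0, hfin⟩
  have hmain : ENNReal.ofReal p * volume A₀ ≤ volume (⋂ k, ⋃₀ 𝓔 k) := by
    calc ENNReal.ofReal p * volume A₀ ≤ ⨅ k, volume (⋃₀ 𝓔 k ∩ A₀) :=
          le_iInf (fun k => le_of_le_of_eq (hlowp k) (congrArg volume (hEA k)).symm)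
      _ = volume (⋂ k, (⋃₀ 𝓔 k ∩ A₀)) := hiInf.symm
      _ ≤ volume (⋂ k, ⋃₀ 𝓔 k) :=
          measure_mono (Set.iInter_mono (fun k => Set.inter_subset_left))
  refine lt_of_lt_of_le ?_ hmain
  exact ENNReal.mul_pos (ENNReal.ofReal_pos.mpr hp).ne'
    (hpos 0 A₀ hA₀).ne'
end
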